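/- arXiv:1109.1778 — 5 statements merged into one kernel-verified Lean document; each statement's English description precedes it below -/
import Mathlib

section
/- Let dim H = 2 and let S be an invertible self-adjoint operator on H with eigenvalues λ, μ satisfying |λ/μ + μ/λ + k| ≥ k + 2 for some k ≥ 0. Then ‖S X S⁻¹ + S⁻¹ X S + kX‖ ≥ (k+2)‖X‖ for every operator X on H. -/
set_option maxHeartbeats 1000000


open ContinuousLinearMap

variable {H : Type*} [NormedAddCommGroup H] [InnerProductSpace ℂ H] [CompleteSpace H]

theorem stmt13 [FiniteDimensional ℂ H] (hdim : Module.finrank ℂ H = 2)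
    (S : (H →L[ℂ] H)ˣ) (hS : IsSelfAdjoint (S : H →L[ℂ] H))
    (l m : ℂ) (hspec : spectrum ℂ (S : H →L[ℂ] H) = {l, m})
    (k : ℝ) (hk : 0 ≤ k) (hlm : k + 2 ≤ ‖l / m + m / l + k‖) :
    ∀ X : H →L[ℂ] H,
      (k + 2) * ‖X‖ ≤ ‖(S : H →L[ℂ] H) * X * (↑S⁻¹ : H →L[ℂ] H) +
        (↑S⁻¹ : H →L[ℂ] H) * X * (S : H →L[ℂ] H) + k • X‖ := by
  intro X
  haveI : Nontrivial H := Module.nontrivial_of_finrank_pos (R := ℂ) (M := H) (by omega)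
  set A : H →L[ℂ] H := (S : H →L[ℂ] H) with hA
  set B : H →L[ℂ] H := (↑S⁻¹ : H →L[ℂ] H) with hB
  have hAB : A * B = 1 := S.mul_inv
  have hBA : B * A = 1 := S.inv_mul
  have hlmem : l ∈ spectrum ℂ A := by rw [hspec]; exact Set.mem_insert _ _
  have hmmem : m ∈ spectrum ℂ A := by rw [hspec]; exact Set.mem_insert_of_mem _ rfl
  have hl0 : l ≠ 0 := by
    intro h; rw [h] at hlmem
    exact spectrum.zero_notMem ℂ S.isUnit hlmem
  have hm0 : m ≠ 0 := by
    intro h; rw [h] at hmmem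
    exact spectrum.zero_notMem ℂ S.isUnit hmmem
  have hlre : l = (l.re : ℂ) := hS.mem_spectrum_eq_re hlmem
  have hmre : m = (m.re : ℂ) := hS.mem_spectrum_eq_re hmmem
  have hquad : (A - l • 1) * (A - m • 1) = 0 := by
    have hN : IsStarNormal A := hS.isStarNormal
    have h0 : cfc (fun z : ℂ => (z - l) * (z - m)) A = 0 := by
      rw [show (0 : H →L[ℂ] H) = cfc (0 : ℂ → ℂ) A from (cfc_zero ℂ A).symm]
      apply cfc_congr
      intro z hz
      rw [hspec] at hz
      simp only [Set.mem_insert_iff, Set.mem_singleton_iff] at hz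
      rcases hz with rfl | rfl <;> simp
    calc (A - l • 1) * (A - m • 1)
        = cfc (fun z : ℂ => (z - l) * (z - m)) A := by
          rw [cfc_mul _ _ A (by fun_prop) (by fun_prop)]
          rw [cfc_sub _ _ A (by fun_prop) (by fun_prop),
            cfc_sub _ _ A (by fun_prop) (by fun_prop)]
          rw [cfc_id' ℂ A, cfc_const l A, cfc_const m A]
          simp [smul_eq_mul, Algebra.algebraMap_eq_smul_one]
      _ = 0 := h0
  have hk2 : (0:ℝ) < k + 2 := by linarith
  have hkc : ((k:ℂ) + 2) ≠ 0 := by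
    intro h
    have h2 : ((k + 2 : ℝ) : ℂ) = 0 := by push_cast; linear_combination h
    rw [Complex.ofReal_eq_zero] at h2; linarith
  have hksmul : k • X = ((k:ℂ)) • X := by
    rw [← algebraMap_smul ℂ k X]; norm_num
  by_cases hlmeq : l = m
  · -- degenerate case : S = l • 1
    subst hlmeq
    have hNsa : IsSelfAdjoint (A - l • 1) := by
      refine hS.sub ?_
      rw [hlre]
      simp only [IsSelfAdjoint, star_smul, star_one, Complex.star_def, Complex.conj_ofReal]
    have hNnorm : ‖A - l • 1‖ * ‖A - l • 1‖ = 0 := by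
      rw [← CStarRing.norm_star_mul_self, hNsa.star_eq, hquad, norm_zero]
    have hAeq : A = l • 1 := by
      have h0 : ‖A - l • 1‖ = 0 := mul_self_eq_zero.mp hNnorm
      have h1 := norm_eq_zero.mp h0
      rw [sub_eq_zero] at h1; exact h1
    have hBeq : B = l⁻¹ • 1 := by
      have h1 : l • B = 1 := by
        calc l • B = (l • 1) * B := by rw [smul_mul_assoc, one_mul]
        _ = A * B := by rw [hAeq]
        _ = 1 := hAB
      calc B = l⁻¹ • (l • B) := by rw [smul_smul, inv_mul_cancel₀ hl0, one_smul]
      _ = l⁻¹ • 1 := by rw [h1]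
    have hterm : A * X * B = X := by
      rw [hAeq, hBeq]
      simp [smul_mul_assoc, mul_smul_comm, smul_smul, mul_inv_cancel₀ hl0,
        inv_mul_cancel₀ hl0]
    have hterm2 : B * X * A = X := by
      rw [hAeq, hBeq]
      simp [smul_mul_assoc, mul_smul_comm, smul_smul, mul_inv_cancel₀ hl0,
        inv_mul_cancel₀ hl0]
    rw [hterm, hterm2, hksmul]
    have hsum : X + X + (k:ℂ) • X = ((k:ℂ) + 2) • X := by
      rw [add_smul]
      have h2 : ((2:ℂ)) • X = X + X := two_smul ℂ X
      rw [h2]; abel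
    rw [hsum, norm_smul]
    have habs : ‖(k:ℂ) + 2‖ = k + 2 := by
      rw [show ((k:ℂ) + 2) = ((k + 2 : ℝ) : ℂ) by push_cast; ring,
        Complex.norm_real, Real.norm_eq_abs, abs_of_pos hk2]
    rw [habs]
  · -- main case : l ≠ m
    have hlm0 : l - m ≠ 0 := sub_ne_zero.mpr hlmeq
    have hA2 : A * A = (l + m) • A - (l * m) • 1 := by
      calc A * A = (A - l • 1) * (A - m • 1) + ((l + m) • A - (l * m) • 1) := by
            simp only [sub_mul, mul_sub, smul_mul_assoc, mul_smul_comm, one_mul, mul_one,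
              smul_smul]
            match_scalars <;> ring
      _ = (l + m) • A - (l * m) • 1 := by rw [hquad, zero_add]
    set P : H →L[ℂ] H := (l - m)⁻¹ • (A - m • 1) with hPdef
    set Q : H →L[ℂ] H := 1 - P with hQdef
    have hPQ1 : P + Q = 1 := by rw [hQdef]; abel
    have hAP : A * P = l • P := by
      rw [hPdef]
      simp only [mul_sub, sub_mul, mul_smul_comm, smul_mul_assoc, mul_one, one_mul, smul_sub,
        sub_smul, smul_smul]
      simp only [hA2]
      match_scalars <;> field_simp <;> ring
    have hPA : P * A = l • P := by
      rw [hPdef]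
      simp only [mul_sub, sub_mul, mul_smul_comm, smul_mul_assoc, mul_one, one_mul, smul_sub,
        sub_smul, smul_smul]
      simp only [hA2]
      match_scalars <;> field_simp <;> ring
    have hPP : P * P = P := by
      rw [hPdef]
      simp only [mul_sub, sub_mul, mul_smul_comm, smul_mul_assoc, mul_one, one_mul, smul_sub,
        sub_smul, smul_smul]
      simp only [hA2]
      match_scalars <;> field_simp <;> ring
    have hAQ : A * Q = m • Q := by
      rw [hQdef, hPdef]
      simp only [mul_sub, sub_mul, mul_smul_comm, smul_mul_assoc, mul_one, one_mul, smul_sub,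
        sub_smul, smul_smul]
      simp only [hA2]
      match_scalars <;> field_simp <;> ring
    have hQA : Q * A = m • Q := by
      rw [hQdef, hPdef]
      simp only [mul_sub, sub_mul, mul_smul_comm, smul_mul_assoc, mul_one, one_mul, smul_sub,
        sub_smul, smul_smul]
      simp only [hA2]
      match_scalars <;> field_simp <;> ring
    have hPQ0 : P * Q = 0 := by rw [hQdef, mul_sub, mul_one, hPP, sub_self]
    have hQP0 : Q * P = 0 := by rw [hQdef, sub_mul, one_mul, hPP, sub_self]
    have hQQ : Q * Q = Q := by rw [hQdef, sub_mul, one_mul, mul_sub, mul_one, hPP]; abel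
    -- B relations
    have hBP : B * P = l⁻¹ • P := by
      have h1 : P = l • (B * P) := by
        calc P = (B * A) * P := by rw [hBA, one_mul]
        _ = B * (A * P) := mul_assoc _ _ _
        _ = l • (B * P) := by rw [hAP, mul_smul_comm]
      calc B * P = l⁻¹ • (l • (B * P)) := by rw [smul_smul, inv_mul_cancel₀ hl0, one_smul]
      _ = l⁻¹ • P := by rw [← h1]
    have hPB : P * B = l⁻¹ • P := by
      have h1 : P = l • (P * B) := by
        calc P = P * (A * B) := by rw [hAB, mul_one]
        _ = (P * A) * B := (mul_assoc _ _ _).symm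
        _ = l • (P * B) := by rw [hPA, smul_mul_assoc]
      calc P * B = l⁻¹ • (l • (P * B)) := by rw [smul_smul, inv_mul_cancel₀ hl0, one_smul]
      _ = l⁻¹ • P := by rw [← h1]
    have hBQ : B * Q = m⁻¹ • Q := by
      have h1 : Q = m • (B * Q) := by
        calc Q = (B * A) * Q := by rw [hBA, one_mul]
        _ = B * (A * Q) := mul_assoc _ _ _
        _ = m • (B * Q) := by rw [hAQ, mul_smul_comm]
      calc B * Q = m⁻¹ • (m • (B * Q)) := by rw [smul_smul, inv_mul_cancel₀ hm0, one_smul]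
      _ = m⁻¹ • Q := by rw [← h1]
    have hQB : Q * B = m⁻¹ • Q := by
      have h1 : Q = m • (Q * B) := by
        calc Q = Q * (A * B) := by rw [hAB, mul_one]
        _ = (Q * A) * B := (mul_assoc _ _ _).symm
        _ = m • (Q * B) := by rw [hQA, smul_mul_assoc]
      calc Q * B = m⁻¹ • (m • (Q * B)) := by rw [smul_smul, inv_mul_cancel₀ hm0, one_smul]
      _ = m⁻¹ • Q := by rw [← h1]
    -- P is self-adjoint
    have hPsa : IsSelfAdjoint P := by
      rw [IsSelfAdjoint, hPdef, star_smul, star_sub, star_smul, star_one, hS.star_eq]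
      rw [hlre, hmre]
      congr 1
      · simp [Complex.star_def, map_inv₀, map_sub, Complex.conj_ofReal]
      · congr 2
        simp [Complex.star_def, Complex.conj_ofReal]
    -- splittings of A and B
    have hAsplit : A = l • P + m • Q := by
      rw [hQdef, hPdef]
      simp only [smul_sub, smul_smul, smul_one]
      match_scalars <;> field_simp <;> ring
    clear_value P Q
    have hBsplit : B = l⁻¹ • P + m⁻¹ • Q := by
      have hAZ : A * (l⁻¹ • P + m⁻¹ • Q) = 1 := by
        rw [mul_add, mul_smul_comm, mul_smul_comm, hAP, hAQ, smul_smul, smul_smul,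
          inv_mul_cancel₀ hl0, inv_mul_cancel₀ hm0, one_smul, one_smul, hPQ1]
      calc B = B * 1 := (mul_one B).symm
      _ = B * (A * (l⁻¹ • P + m⁻¹ • Q)) := by rw [hAZ]
      _ = (B * A) * (l⁻¹ • P + m⁻¹ • Q) := (mul_assoc _ _ _).symm
      _ = l⁻¹ • P + m⁻¹ • Q := by rw [hBA, one_mul]
    set D : H →L[ℂ] H := P - Q with hDdef
    have hDsa : IsSelfAdjoint D := by
      rw [hDdef, hQdef]
      exact hPsa.sub ((IsSelfAdjoint.one _).sub hPsa)
    have hDD : D * D = 1 := by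
      rw [hDdef, sub_mul, mul_sub, mul_sub, hPP, hPQ0, hQP0, hQQ, sub_zero, zero_sub,
        sub_neg_eq_add, hPQ1]
    have hDnorm : ‖D‖ = 1 := by
      have h1 : ‖D‖ * ‖D‖ = 1 := by
        rw [← CStarRing.norm_star_mul_self, hDsa.star_eq, hDD, norm_one]
      rcases mul_self_eq_one_iff.mp h1 with h | h
      · exact h
      · have := norm_nonneg D; linarith
    have hDP : D * P = P := by rw [hDdef, sub_mul, hPP, hQP0, sub_zero]
    have hPD : P * D = P := by rw [hDdef, mul_sub, hPP, hPQ0, sub_zero]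
    have hDQ : D * Q = -Q := by rw [hDdef, sub_mul, hPQ0, hQQ, zero_sub]
    have hQD : Q * D = -Q := by rw [hDdef, mul_sub, hQP0, hQQ, zero_sub]
    clear_value D
    -- the four corner components
    set X1 : H →L[ℂ] H := P * (X * P) with hX1
    set X2 : H →L[ℂ] H := P * (X * Q) with hX2
    set X3 : H →L[ℂ] H := Q * (X * P) with hX3
    set X4 : H →L[ℂ] H := Q * (X * Q) with hX4
    have hXsum : X = X1 + X2 + X3 + X4 := by
      rw [hX1, hX2, hX3, hX4]
      calc X = 1 * (X * 1) := by rw [one_mul, mul_one]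
      _ = (P + Q) * (X * (P + Q)) := by rw [hPQ1]
      _ = P * (X * P) + P * (X * Q) + Q * (X * P) + Q * (X * Q) := by noncomm_ring
    clear_value X1 X2 X3 X4
    set c : ℂ := l / m + m / l + (k:ℂ) with hcdef
    set cr : ℝ := l.re / m.re + m.re / l.re + k with hcrdef
    have hccr : c = (cr : ℂ) := by
      rw [hcdef, hcrdef]
      conv_lhs => rw [hlre, hmre]
      push_cast
      ring
    have hcrabs : k + 2 ≤ |cr| := by
      rw [hccr, Complex.norm_real, Real.norm_eq_abs] at hlm
      exact hlm
    have hcr0 : cr ≠ 0 := by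
      intro h; rw [h] at hcrabs; simp at hcrabs; linarith
    have hc0 : c ≠ 0 := by
      rw [hccr]; exact Complex.ofReal_ne_zero.mpr hcr0
    have hABX : A * (X * B) = X1 + (l/m) • X2 + (m/l) • X3 + X4 := by
      rw [hX1, hX2, hX3, hX4]
      conv_lhs => rw [hAsplit, hBsplit]
      simp only [mul_add, add_mul, smul_mul_assoc, mul_smul_comm, smul_smul, smul_add]
      match_scalars <;> field_simp
    have hBXA : B * (X * A) = X1 + (m/l) • X2 + (l/m) • X3 + X4 := by
      rw [hX1, hX2, hX3, hX4]
      conv_lhs => rw [hAsplit, hBsplit]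
      simp only [mul_add, add_mul, smul_mul_assoc, mul_smul_comm, smul_smul, smul_add]
      match_scalars <;> field_simp
    set Y : H →L[ℂ] H := A * (X * B) + B * (X * A) + (k:ℂ) • X with hYdef
    have hY : Y = ((k:ℂ) + 2) • (X1 + X4) + c • (X2 + X3) := by
      rw [hYdef, hABX, hBXA]
      rw [show (k:ℂ) • X = (k:ℂ) • (X1 + X2 + X3 + X4) from by rw [← hXsum]]
      rw [hcdef]
      match_scalars <;> field_simp <;> ring
    -- conjugation by D flips the off-diagonal part
    have hDX1D : D * (X1 * D) = X1 := by
      rw [hX1, mul_assoc, mul_assoc, hPD, ← mul_assoc, hDP]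
    have hDX4D : D * (X4 * D) = X4 := by
      rw [hX4, mul_assoc, mul_assoc, hQD, ← mul_assoc, hDQ]
      simp only [mul_neg, neg_mul, neg_neg]
    have hDX2D : D * (X2 * D) = -X2 := by
      rw [hX2, mul_assoc, mul_assoc, hQD, ← mul_assoc, hDP]
      simp only [mul_neg]
    have hDX3D : D * (X3 * D) = -X3 := by
      rw [hX3, mul_assoc, mul_assoc, hPD, ← mul_assoc, hDQ]
      simp only [neg_mul]
    have hDYD : D * (Y * D) = ((k:ℂ) + 2) • (X1 + X4) - c • (X2 + X3) := by
      rw [hY]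
      simp only [add_mul, smul_mul_assoc, mul_add, mul_smul_comm, smul_add]
      rw [hDX1D, hDX2D, hDX3D, hDX4D]
      simp only [smul_neg]
      abel
    -- the inversion identity
    set p : ℂ := (((k:ℂ) + 2)⁻¹ + c⁻¹) / 2 with hpdef
    set q : ℂ := (((k:ℂ) + 2)⁻¹ - c⁻¹) / 2 with hqdef
    have key : p • Y + q • (D * (Y * D)) = X := by
      rw [hDYD, hY]
      conv_rhs => rw [hXsum]
      rw [hpdef, hqdef]
      match_scalars <;> field_simp <;> ring
    -- real forms of the scalars
    set pr : ℝ := ((k + 2)⁻¹ + cr⁻¹) / 2 with hprdef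
    set qr : ℝ := ((k + 2)⁻¹ - cr⁻¹) / 2 with hqrdef
    have hppr : p = (pr : ℂ) := by rw [hpdef, hprdef, hccr]; push_cast; ring
    have hqqr : q = (qr : ℂ) := by rw [hqdef, hqrdef, hccr]; push_cast; ring
    have hcrinv : |cr⁻¹| ≤ (k + 2)⁻¹ := by
      rw [abs_inv]
      exact inv_anti₀ hk2 hcrabs
    have habsbound : |cr⁻¹| ≤ (k+2)⁻¹ := hcrinv
    have hprpos : 0 ≤ pr := by
      rw [hprdef]
      have := abs_le.mp habsbound
      linarith [this.1]
    have hqrpos : 0 ≤ qr := by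
      rw [hqrdef]
      have := abs_le.mp habsbound
      linarith [this.2]
    have hprqr : |pr| + |qr| = (k + 2)⁻¹ := by
      rw [abs_of_nonneg hprpos, abs_of_nonneg hqrpos, hprdef, hqrdef]; ring
    -- norm estimates
    have hDYDnorm : ‖D * (Y * D)‖ ≤ ‖Y‖ := by
      calc ‖D * (Y * D)‖ ≤ ‖D‖ * ‖Y * D‖ := norm_mul_le _ _
      _ ≤ ‖D‖ * (‖Y‖ * ‖D‖) := by
          apply mul_le_mul_of_nonneg_left (norm_mul_le _ _) (norm_nonneg _)
      _ = ‖Y‖ := by rw [hDnorm]; ring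
    have hXle : ‖X‖ ≤ (k + 2)⁻¹ * ‖Y‖ := by
      calc ‖X‖ = ‖p • Y + q • (D * (Y * D))‖ := by rw [key]
      _ ≤ ‖p • Y‖ + ‖q • (D * (Y * D))‖ := norm_add_le _ _
      _ = ‖p‖ * ‖Y‖ + ‖q‖ * ‖D * (Y * D)‖ := by rw [norm_smul, norm_smul]
      _ ≤ |pr| * ‖Y‖ + |qr| * ‖Y‖ := by
          have h1 : ‖p‖ = |pr| := by rw [hppr, Complex.norm_real, Real.norm_eq_abs]
          have h2 : ‖q‖ = |qr| := by rw [hqqr, Complex.norm_real, Real.norm_eq_abs]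
          rw [h1, h2]
          have := mul_le_mul_of_nonneg_left hDYDnorm (abs_nonneg qr)
          linarith
      _ = (|pr| + |qr|) * ‖Y‖ := by ring
      _ = (k + 2)⁻¹ * ‖Y‖ := by rw [hprqr]
    have hgoal : A * X * B + B * X * A + k • X = Y := by
      rw [hYdef, hksmul, mul_assoc, mul_assoc]
    rw [hgoal]
    calc (k + 2) * ‖X‖ ≤ (k + 2) * ((k + 2)⁻¹ * ‖Y‖) :=
          mul_le_mul_of_nonneg_left hXle (le_of_lt hk2)
    _ = ‖Y‖ := by field_simp
end

section
/- For an invertible bounded operator S on a complex Hilbert space and bounded operators X, Y, the block-diagonal operator (S Y S⁻¹ + S*⁻¹ Y S*) ⊕ (S* X S*⁻¹ + S⁻¹ X S) on H ⊕ H has operator norm at least 2‖X ⊕ Y‖; equivalently, max{‖S Y S⁻¹ + S*⁻¹ Y S*‖, ‖S* X S*⁻¹ + S⁻¹ X S‖} ≥ 2 max{‖X‖, ‖Y‖}. -/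
open ContinuousLinearMap

variable {H : Type*} [NormedAddCommGroup H] [InnerProductSpace ℂ H] [CompleteSpace H]

/-- The block-diagonal operator `A ⊕ B` acting on the Hilbert space `H ⊕ H`
(realized as `WithLp 2 (H × H)`). -/
noncomputable def directSum (A B : H →L[ℂ] H) :
    WithLp 2 (H × H) →L[ℂ] WithLp 2 (H × H) :=
  ((WithLp.prodContinuousLinearEquiv 2 ℂ H H).symm : (H × H) →L[ℂ] WithLp 2 (H × H)) ∘L
    (A.prodMap B) ∘L
      ((WithLp.prodContinuousLinearEquiv 2 ℂ H H) : WithLp 2 (H × H) →L[ℂ] (H × H))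

open NormedSpace
open scoped InnerProductSpace

set_option synthInstance.maxHeartbeats 1000000
set_option maxHeartbeats 2000000

lemma cpr (S Sinv X : H →L[ℂ] H) (h2 : Sinv * S = 1) :
    2 * ‖X‖ ≤ ‖S * X * Sinv + adjoint Sinv * X * adjoint S‖ := by
  by_cases hX : X = 0
  · simp [hX]
  set B := S * X * Sinv + adjoint Sinv * X * adjoint S with hBdef
  set P := adjoint S * S with hPdef
  have hSinvS : ∀ v : H, Sinv (S v) = v := fun v => by
    have h : (Sinv * S) v = (1 : H →L[ℂ] H) v := by rw [h2]
    simpa using h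
  have hSinv0 : Sinv ≠ 0 := by
    intro h
    apply hX
    have h1 : (1 : H →L[ℂ] H) = 0 := by rw [← h2, h, zero_mul]
    calc X = X * 1 := (mul_one X).symm
    _ = 0 := by rw [h1, mul_zero]
  have hSinvpos : (0:ℝ) < ‖Sinv‖ := norm_pos_iff.mpr hSinv0
  set ε : ℝ := (‖Sinv‖ ^ 2)⁻¹ with hεdef
  have hεpos : 0 < ε := by positivity
  have hSv : ∀ v : H, ε * ‖v‖ ^ 2 ≤ ‖S v‖ ^ 2 := by
    intro v
    have h0 : ‖v‖ ≤ ‖Sinv‖ * ‖S v‖ := by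
      calc ‖v‖ = ‖Sinv (S v)‖ := by rw [hSinvS]
      _ ≤ ‖Sinv‖ * ‖S v‖ := le_opNorm _ _
    rw [hεdef, inv_mul_le_iff₀ (by positivity)]
    nlinarith [norm_nonneg v, norm_nonneg (S v)]
  have hPa : adjoint P = P := by simp [hPdef, ← star_eq_adjoint, star_mul]
  have hPinner : ∀ a b : H, ⟪a, P b⟫_ℂ = ⟪P a, b⟫_ℂ := fun a b => by
    rw [← hPa, adjoint_inner_left, hPa]
  have hvPv : ∀ v : H, ⟪v, P v⟫_ℂ = ((‖S v‖ : ℂ)) ^ 2 := fun v => by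
    rw [hPdef, ContinuousLinearMap.mul_apply, adjoint_inner_right, inner_self_eq_norm_sq_to_K]
    norm_cast
  have hkey : ∀ a b : H, ⟪(P * X + X * P) a, b⟫_ℂ = ⟪B (S a), S b⟫_ℂ := by
    intro a b
    simp only [hBdef, hPdef, ContinuousLinearMap.add_apply, ContinuousLinearMap.mul_apply, inner_add_left, hSinvS, adjoint_inner_left]
  -- the semigroup
  set E : ℝ → H →L[ℂ] H := fun t => exp (t • (-P)) with hEdef
  have hEx : ∀ (x : H) (t : ℝ), HasDerivAt (fun u => E u x) (-(P (E t x))) t := by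
    intro x t
    have h := hasDerivAt_exp_smul_const' (-P) t
    have h2 := ((ContinuousLinearMap.apply ℂ H x).restrictScalars ℝ).hasFDerivAt.comp_hasDerivAt t h
    simpa [hEdef, Function.comp_def] using h2
  have hEcont : ∀ x : H, Continuous fun t => E t x := by
    intro x
    have hd : Differentiable ℝ fun t => E t x := fun t => (hEx x t).differentiableAt
    exact hd.continuous
  have hE0 : ∀ x : H, E 0 x = x := by
    intro x; simp [hEdef, exp_zero]
  -- derivative of squared norm
  have hh : ∀ (x : H) (t : ℝ), HasDerivAt (fun u => ‖E u x‖ ^ 2) (-(2 * ‖S (E t x)‖ ^ 2)) t := by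
    intro x t
    have h1 := (hEx x t).inner ℂ (hEx x t)
    have h2 := (Complex.reCLM).hasFDerivAt.comp_hasDerivAt t h1
    have hfun : (fun u => Complex.reCLM ⟪E u x, E u x⟫_ℂ) = fun u => ‖E u x‖ ^ 2 := by
      funext u
      have := inner_self_eq_norm_sq (𝕜 := ℂ) (E u x)
      simpa using this
    have hval : Complex.reCLM (⟪E t x, -(P (E t x))⟫_ℂ + ⟪-(P (E t x)), E t x⟫_ℂ)
        = -(2 * ‖S (E t x)‖ ^ 2) := by
      have e1 : ⟪E t x, P (E t x)⟫_ℂ = ((‖S (E t x)‖ : ℂ)) ^ 2 := hvPv _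
      have e2 : ⟪P (E t x), E t x⟫_ℂ = ((‖S (E t x)‖ : ℂ)) ^ 2 := by
        rw [← hPinner, e1]
      simp only [inner_neg_right, inner_neg_left, e1, e2]
      simp [← Complex.ofReal_pow]
      ring
    rw [← hfun, ← hval]
    exact h2
  have hhcont : ∀ x : H, Continuous fun t => ‖S (E t x)‖ ^ 2 := fun x =>
    ((S.continuous.comp (hEcont x)).norm.pow 2)
  -- integral of ‖S E t x‖² over [0,A]
  have hInt : ∀ (x : H) (A : ℝ), 0 ≤ A →
      (∫ t in (0:ℝ)..A, ‖S (E t x)‖ ^ 2) = (‖x‖ ^ 2 - ‖E A x‖ ^ 2) / 2 := by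
    intro x A hA
    have hftc := intervalIntegral.integral_eq_sub_of_hasDerivAt
      (f := fun u => ‖E u x‖ ^ 2) (f' := fun t => -(2 * ‖S (E t x)‖ ^ 2))
      (fun t _ => hh x t)
      ((continuous_const.mul (hhcont x)).neg.intervalIntegrable 0 A)
    have h3 : ∫ t in (0:ℝ)..A, -(2 * ‖S (E t x)‖ ^ 2) = ‖E A x‖ ^ 2 - ‖x‖ ^ 2 := by
      rw [hftc]; simp only [hE0]
    rw [intervalIntegral.integral_neg, intervalIntegral.integral_const_mul] at h3
    linarith
  -- antitonicity of t ↦ ‖E t x‖²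
  have hant : ∀ x : H, Antitone fun t => ‖E t x‖ ^ 2 := by
    intro x
    apply antitone_of_deriv_nonpos
    · exact fun t => (hh x t).differentiableAt
    · intro t
      rw [(hh x t).deriv]
      nlinarith [sq_nonneg ‖S (E t x)‖]
  -- decay
  have hdecay : ∀ x : H, ‖x‖ ≤ 1 → ∀ A : ℝ, 0 ≤ A → (1 + 2 * ε * A) * ‖E A x‖ ^ 2 ≤ 1 := by
    intro x hx A hA
    have hmono : ∀ t ∈ Set.Icc (0:ℝ) A, ‖E A x‖ ^ 2 ≤ ‖E t x‖ ^ 2 := fun t ht =>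
      hant x ht.2
    have h1 : A * ‖E A x‖ ^ 2 ≤ ∫ t in (0:ℝ)..A, ‖E t x‖ ^ 2 := by
      have := intervalIntegral.integral_mono_on hA
        (intervalIntegrable_const (μ := MeasureTheory.volume) (c := ‖E A x‖ ^ 2))
        (((hEcont x).norm.pow 2).intervalIntegrable 0 A)
        hmono
      simpa [mul_comm] using this
    have h2' : ε * ∫ t in (0:ℝ)..A, ‖E t x‖ ^ 2 ≤ ∫ t in (0:ℝ)..A, ‖S (E t x)‖ ^ 2 := by
      rw [← intervalIntegral.integral_const_mul]
      apply intervalIntegral.integral_mono_on hA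
        ((continuous_const.mul ((hEcont x).norm.pow 2)).intervalIntegrable 0 A)
        ((hhcont x).intervalIntegrable 0 A)
      exact fun t _ => hSv (E t x)
    rw [hInt x A hA] at h2'
    have h3 : ε * (A * ‖E A x‖ ^ 2) ≤ (‖x‖ ^ 2 - ‖E A x‖ ^ 2) / 2 := by
      have := mul_le_mul_of_nonneg_left h1 hεpos.le
      linarith
    have hx2 : ‖x‖ ^ 2 ≤ 1 := by nlinarith [norm_nonneg x]
    nlinarith [sq_nonneg ‖E A x‖]
  -- main estimate
  have hmain : ∀ (x y : H), ‖x‖ ≤ 1 → ‖y‖ ≤ 1 → ∀ A : ℝ, 0 ≤ A →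
      ‖⟪X x, y⟫_ℂ‖ ≤ ‖B‖ / 2 + ‖X‖ * (1 / (1 + 2 * ε * A)) := by
    intro x y hx hy A hA
    have hC : (0:ℝ) < 1 + 2 * ε * A := by positivity
    set g : ℝ → ℂ := fun t => ⟪X (E t x), E t y⟫_ℂ with hgdef
    have hg : ∀ t : ℝ, HasDerivAt g (-⟪B (S (E t x)), S (E t y)⟫_ℂ) t := by
      intro t
      have hu : HasDerivAt (fun u => X (E u x)) (X (-(P (E t x)))) t :=
        (X.restrictScalars ℝ).hasFDerivAt.comp_hasDerivAt t (hEx x t)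
      have h1 := hu.inner ℂ (hEx y t)
      have hval : ⟪X (E t x), -(P (E t y))⟫_ℂ + ⟪X (-(P (E t x))), E t y⟫_ℂ
          = -⟪B (S (E t x)), S (E t y)⟫_ℂ := by
        rw [← hkey]
        simp only [map_neg, inner_neg_right, inner_neg_left, ContinuousLinearMap.add_apply, ContinuousLinearMap.mul_apply,
          inner_add_left]
        rw [hPinner (X (E t x)) (E t y)]
        ring
      rw [← hval]
      exact h1
    have hgcont : Continuous fun t => -⟪B (S (E t x)), S (E t y)⟫_ℂ := by
      have c1 : Continuous fun t => B (S (E t x)) :=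
        B.continuous.comp (S.continuous.comp (hEcont x))
      have c2 : Continuous fun t => S (E t y) := S.continuous.comp (hEcont y)
      exact (c1.inner c2).neg
    have hftc := intervalIntegral.integral_eq_sub_of_hasDerivAt
      (f := g) (f' := fun t => -⟪B (S (E t x)), S (E t y)⟫_ℂ)
      (fun t _ => hg t) (hgcont.intervalIntegrable 0 A)
    rw [intervalIntegral.integral_neg] at hftc
    have hg0 : g 0 = ⟪X x, y⟫_ℂ := by rw [hgdef]; simp only []; rw [hE0, hE0]
    have hrep : ⟪X x, y⟫_ℂ = g A + ∫ t in (0:ℝ)..A, ⟪B (S (E t x)), S (E t y)⟫_ℂ := by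
      rw [← hg0]; linear_combination hftc
    -- bound the integral term
    have hbound1 : ‖∫ t in (0:ℝ)..A, ⟪B (S (E t x)), S (E t y)⟫_ℂ‖ ≤ ‖B‖ / 2 := by
      have hgint : IntervalIntegrable
          (fun t => ‖B‖ / 2 * (‖S (E t x)‖ ^ 2 + ‖S (E t y)‖ ^ 2)) MeasureTheory.volume 0 A :=
        (continuous_const.mul ((hhcont x).add (hhcont y))).intervalIntegrable 0 A
      have hptwise : ∀ t : ℝ,
          ‖⟪B (S (E t x)), S (E t y)⟫_ℂ‖ ≤ ‖B‖ / 2 * (‖S (E t x)‖ ^ 2 + ‖S (E t y)‖ ^ 2) := by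
        intro t
        have c1 : ‖⟪B (S (E t x)), S (E t y)⟫_ℂ‖ ≤ ‖B (S (E t x))‖ * ‖S (E t y)‖ :=
          norm_inner_le_norm _ _
        have c2 : ‖B (S (E t x))‖ ≤ ‖B‖ * ‖S (E t x)‖ := le_opNorm _ _
        nlinarith [norm_nonneg (S (E t y)), norm_nonneg (S (E t x)), norm_nonneg B,
          mul_nonneg (norm_nonneg B) (sq_nonneg (‖S (E t x)‖ - ‖S (E t y)‖))]
      have hle := intervalIntegral.norm_integral_le_abs_of_norm_le
        (f := fun t => ⟪B (S (E t x)), S (E t y)⟫_ℂ)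
        (MeasureTheory.ae_of_all _ hptwise) hgint
      have hcalc : (∫ t in (0:ℝ)..A, ‖B‖ / 2 * (‖S (E t x)‖ ^ 2 + ‖S (E t y)‖ ^ 2))
          = ‖B‖ / 2 * ((‖x‖ ^ 2 - ‖E A x‖ ^ 2) / 2 + (‖y‖ ^ 2 - ‖E A y‖ ^ 2) / 2) := by
        rw [intervalIntegral.integral_const_mul,
          intervalIntegral.integral_add ((hhcont x).intervalIntegrable 0 A)
            ((hhcont y).intervalIntegrable 0 A), hInt x A hA, hInt y A hA]
      have hnn : (0:ℝ) ≤ ∫ t in (0:ℝ)..A, ‖B‖ / 2 * (‖S (E t x)‖ ^ 2 + ‖S (E t y)‖ ^ 2) := by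
        apply intervalIntegral.integral_nonneg hA
        intro t _
        positivity
      have hfin : |∫ t in (0:ℝ)..A, ‖B‖ / 2 * (‖S (E t x)‖ ^ 2 + ‖S (E t y)‖ ^ 2)| ≤ ‖B‖ / 2 := by
        rw [abs_of_nonneg hnn, hcalc]
        have hx2 : ‖x‖ ^ 2 ≤ 1 := by nlinarith [norm_nonneg x]
        have hy2 : ‖y‖ ^ 2 ≤ 1 := by nlinarith [norm_nonneg y]
        nlinarith [norm_nonneg B, sq_nonneg ‖E A x‖, sq_nonneg ‖E A y‖]
      exact hle.trans hfin
    -- bound g A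
    have hgA : ‖g A‖ ≤ ‖X‖ * (1 / (1 + 2 * ε * A)) := by
      have d1 : ‖g A‖ ≤ ‖X (E A x)‖ * ‖E A y‖ := norm_inner_le_norm _ _
      have d2 : ‖X (E A x)‖ ≤ ‖X‖ * ‖E A x‖ := le_opNorm _ _
      have e1 := hdecay x hx A hA
      have e2 := hdecay y hy A hA
      have hab : ‖E A x‖ * ‖E A y‖ ≤ 1 / (1 + 2 * ε * A) := by
        rw [le_div_iff₀ hC]
        nlinarith [sq_nonneg (‖E A x‖ - ‖E A y‖)]
      calc ‖g A‖ ≤ ‖X (E A x)‖ * ‖E A y‖ := d1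
      _ ≤ (‖X‖ * ‖E A x‖) * ‖E A y‖ := mul_le_mul_of_nonneg_right d2 (norm_nonneg _)
      _ = ‖X‖ * (‖E A x‖ * ‖E A y‖) := by ring
      _ ≤ ‖X‖ * (1 / (1 + 2 * ε * A)) := mul_le_mul_of_nonneg_left hab (norm_nonneg _)
    calc ‖⟪X x, y⟫_ℂ‖ = ‖g A + ∫ t in (0:ℝ)..A, ⟪B (S (E t x)), S (E t y)⟫_ℂ‖ := by rw [hrep]
    _ ≤ ‖g A‖ + ‖∫ t in (0:ℝ)..A, ⟪B (S (E t x)), S (E t y)⟫_ℂ‖ := norm_add_le _ _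
    _ ≤ ‖X‖ * (1 / (1 + 2 * ε * A)) + ‖B‖ / 2 := add_le_add hgA hbound1
    _ = ‖B‖ / 2 + ‖X‖ * (1 / (1 + 2 * ε * A)) := by ring
  -- operator norm bound
  have hX2 : ∀ A : ℝ, 0 ≤ A → ‖X‖ ≤ ‖B‖ / 2 + ‖X‖ * (1 / (1 + 2 * ε * A)) := by
    intro A hA
    have hC : (0:ℝ) < 1 + 2 * ε * A := by positivity
    have hc0 : (0:ℝ) ≤ ‖B‖ / 2 + ‖X‖ * (1 / (1 + 2 * ε * A)) := by positivity
    refine opNorm_le_bound _ hc0 fun x => ?_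
    rcases eq_or_ne x 0 with rfl | hx0
    · simp
    have hxn : (0:ℝ) < ‖x‖ := norm_pos_iff.mpr hx0
    set u : H := (‖x‖ : ℂ)⁻¹ • x with hu
    have hun : ‖u‖ = 1 := by
      rw [hu, norm_smul, norm_inv, Complex.norm_real, Real.norm_of_nonneg (norm_nonneg x),
        inv_mul_cancel₀ hxn.ne']
    have hXu : ‖X u‖ ≤ ‖B‖ / 2 + ‖X‖ * (1 / (1 + 2 * ε * A)) := by
      rcases eq_or_ne (X u) 0 with h0 | h0
      · rw [h0, norm_zero]; exact hc0
      have hXun : (0:ℝ) < ‖X u‖ := norm_pos_iff.mpr h0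
      set y : H := ((‖X u‖ : ℂ))⁻¹ • (X u) with hy
      have hyn : ‖y‖ = 1 := by
        rw [hy, norm_smul, norm_inv, Complex.norm_real, Real.norm_of_nonneg (norm_nonneg _),
          inv_mul_cancel₀ hXun.ne']
      have hin : ⟪X u, y⟫_ℂ = (‖X u‖ : ℂ) := by
        have hcne : ((‖X u‖ : ℂ)) ≠ 0 := by exact_mod_cast hXun.ne'
        rw [hy, inner_smul_right, inner_self_eq_norm_sq_to_K]
        push_cast
        field_simp
        rfl
      have := hmain u y hun.le hyn.le A hA
      rw [hin] at this
      simpa using this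
    have hXx : ‖X x‖ = ‖x‖ * ‖X u‖ := by
      rw [hu, map_smul, norm_smul, norm_inv, Complex.norm_real,
        Real.norm_of_nonneg (norm_nonneg x)]
      field_simp
    rw [hXx, mul_comm]
    exact mul_le_mul_of_nonneg_right hXu hxn.le
  -- conclude
  have hXpos : 0 < ‖X‖ := norm_pos_iff.mpr hX
  have hfinal : ∀ δ : ℝ, 0 < δ → 2 * ‖X‖ ≤ ‖B‖ + δ := by
    intro δ hδ
    set A : ℝ := ‖X‖ / (δ * ε) with hA
    have hA0 : (0:ℝ) ≤ A := by positivity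
    have hC : (0:ℝ) < 1 + 2 * ε * A := by positivity
    have h := hX2 A hA0
    have hεA : 2 * ε * A = 2 * ‖X‖ / δ := by
      rw [hA]; field_simp
    have h2' : ‖X‖ * (1 / (1 + 2 * ε * A)) ≤ δ / 2 := by
      rw [mul_one_div, div_le_div_iff₀ hC (by norm_num : (0:ℝ) < 2)]
      calc ‖X‖ * 2 = δ * (2 * ‖X‖ / δ) := by field_simp
      _ ≤ δ * (1 + 2 * ε * A) := by
          apply mul_le_mul_of_nonneg_left _ hδ.le
          rw [hεA]; linarith [div_nonneg (by positivity : (0:ℝ) ≤ 2 * ‖X‖) hδ.le]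
    linarith
  by_contra hcon
  push_neg at hcon
  have hpos : (0:ℝ) < (2 * ‖X‖ - ‖B‖) / 2 := by linarith
  have := hfinal _ hpos
  linarith


lemma norm_directSum_le (A B : H →L[ℂ] H) : ‖directSum A B‖ ≤ max ‖A‖ ‖B‖ := by
  refine opNorm_le_bound _ (le_max_of_le_left (norm_nonneg A)) fun v => ?_
  set M := max ‖A‖ ‖B‖ with hM
  have hM0 : (0:ℝ) ≤ M := le_max_of_le_left (norm_nonneg A)
  have h1 : ‖directSum A B v‖ ^ 2 = ‖A v.fst‖ ^ 2 + ‖B v.snd‖ ^ 2 := by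
    rw [WithLp.prod_norm_sq_eq_of_L2]; rfl
  have h2 : ‖v‖ ^ 2 = ‖v.fst‖ ^ 2 + ‖v.snd‖ ^ 2 := WithLp.prod_norm_sq_eq_of_L2 v
  have hA : ‖A v.fst‖ ≤ M * ‖v.fst‖ :=
    (A.le_opNorm _).trans (mul_le_mul_of_nonneg_right (le_max_left _ _) (norm_nonneg _))
  have hB : ‖B v.snd‖ ≤ M * ‖v.snd‖ :=
    (B.le_opNorm _).trans (mul_le_mul_of_nonneg_right (le_max_right _ _) (norm_nonneg _))
  have hsq : ‖directSum A B v‖ ^ 2 ≤ (M * ‖v‖) ^ 2 := by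
    rw [h1, mul_pow, h2]
    nlinarith [norm_nonneg (A v.fst), norm_nonneg (B v.snd), norm_nonneg v.fst,
      norm_nonneg v.snd, mul_nonneg hM0 (norm_nonneg v.fst), mul_nonneg hM0 (norm_nonneg v.snd)]
  nlinarith [norm_nonneg (directSum A B v), mul_nonneg hM0 (norm_nonneg v)]

lemma norm_symm_pair_zero (y : H) : ‖(WithLp.equiv 2 (H × H)).symm (y, (0:H))‖ = ‖y‖ := by
  have h : ‖(WithLp.equiv 2 (H × H)).symm (y, (0:H))‖ ^ 2 = ‖y‖ ^ 2 + ‖(0:H)‖ ^ 2 := by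
    rw [WithLp.prod_norm_sq_eq_of_L2]; rfl
  rw [norm_zero] at h
  nlinarith [norm_nonneg ((WithLp.equiv 2 (H × H)).symm (y, (0:H))), norm_nonneg y]

lemma norm_symm_pair_zero' (y : H) : ‖(WithLp.equiv 2 (H × H)).symm ((0:H), y)‖ = ‖y‖ := by
  have h : ‖(WithLp.equiv 2 (H × H)).symm ((0:H), y)‖ ^ 2 = ‖(0:H)‖ ^ 2 + ‖y‖ ^ 2 := by
    rw [WithLp.prod_norm_sq_eq_of_L2]; rfl
  rw [norm_zero] at h
  nlinarith [norm_nonneg ((WithLp.equiv 2 (H × H)).symm ((0:H), y)), norm_nonneg y]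

lemma le_norm_directSum_left (A B : H →L[ℂ] H) : ‖A‖ ≤ ‖directSum A B‖ := by
  refine opNorm_le_bound _ (norm_nonneg _) fun x => ?_
  have hDv : directSum A B ((WithLp.equiv 2 (H × H)).symm (x, 0)) =
      (WithLp.equiv 2 (H × H)).symm (A x, 0) := by
    apply (WithLp.equiv 2 (H × H)).injective
    ext <;> simp [directSum]
  calc ‖A x‖ = ‖directSum A B ((WithLp.equiv 2 (H × H)).symm (x, 0))‖ := by
        rw [hDv, norm_symm_pair_zero]
  _ ≤ ‖directSum A B‖ * ‖(WithLp.equiv 2 (H × H)).symm (x, (0:H))‖ := le_opNorm _ _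
  _ = ‖directSum A B‖ * ‖x‖ := by rw [norm_symm_pair_zero]

lemma le_norm_directSum_right (A B : H →L[ℂ] H) : ‖B‖ ≤ ‖directSum A B‖ := by
  refine opNorm_le_bound _ (norm_nonneg _) fun x => ?_
  have hDv : directSum A B ((WithLp.equiv 2 (H × H)).symm (0, x)) =
      (WithLp.equiv 2 (H × H)).symm (0, B x) := by
    apply (WithLp.equiv 2 (H × H)).injective
    ext <;> simp [directSum]
  calc ‖B x‖ = ‖directSum A B ((WithLp.equiv 2 (H × H)).symm (0, x))‖ := by
        rw [hDv, norm_symm_pair_zero']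
  _ ≤ ‖directSum A B‖ * ‖(WithLp.equiv 2 (H × H)).symm ((0:H), x)‖ := le_opNorm _ _
  _ = ‖directSum A B‖ * ‖x‖ := by rw [norm_symm_pair_zero']


theorem stmt14 (S : (H →L[ℂ] H)ˣ) (X Y : H →L[ℂ] H) :
    2 * ‖directSum X Y‖ ≤
      ‖directSum
        ((S : H →L[ℂ] H) * Y * (↑S⁻¹ : H →L[ℂ] H) +
          adjoint (↑S⁻¹ : H →L[ℂ] H) * Y * adjoint (S : H →L[ℂ] H))
        (adjoint (S : H →L[ℂ] H) * X * adjoint (↑S⁻¹ : H →L[ℂ] H) +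
          (↑S⁻¹ : H →L[ℂ] H) * X * (S : H →L[ℂ] H))‖ ∧
      2 * max ‖X‖ ‖Y‖ ≤ max
        ‖(S : H →L[ℂ] H) * Y * (↑S⁻¹ : H →L[ℂ] H) +
          adjoint (↑S⁻¹ : H →L[ℂ] H) * Y * adjoint (S : H →L[ℂ] H)‖
        ‖adjoint (S : H →L[ℂ] H) * X * adjoint (↑S⁻¹ : H →L[ℂ] H) +
          (↑S⁻¹ : H →L[ℂ] H) * X * (S : H →L[ℂ] H)‖ := by
  set Sc : H →L[ℂ] H := (S : H →L[ℂ] H) with hSc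
  set Si : H →L[ℂ] H := (↑S⁻¹ : H →L[ℂ] H) with hSi
  have hinv : Si * Sc = 1 := by
    rw [hSc, hSi, ← Units.val_mul, inv_mul_cancel S, Units.val_one]
  have hinv' : Sc * Si = 1 := by
    rw [hSc, hSi, ← Units.val_mul, mul_inv_cancel S, Units.val_one]
  have cprY : 2 * ‖Y‖ ≤ ‖Sc * Y * Si + adjoint Si * Y * adjoint Sc‖ := cpr Sc Si Y hinv
  have hadj : adjoint Si * adjoint Sc = 1 := by
    rw [← star_eq_adjoint, ← star_eq_adjoint, ← star_mul, hinv', star_one]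
  have cprX : 2 * ‖X‖ ≤ ‖adjoint Sc * X * adjoint Si + Si * X * Sc‖ := by
    have h := cpr (adjoint Sc) (adjoint Si) X hadj
    rwa [adjoint_adjoint, adjoint_adjoint] at h
  set N := Sc * Y * Si + adjoint Si * Y * adjoint Sc with hN
  set M := adjoint Sc * X * adjoint Si + Si * X * Sc with hM
  have c2 : 2 * max ‖X‖ ‖Y‖ ≤ max ‖N‖ ‖M‖ := by
    rcases le_total ‖X‖ ‖Y‖ with h | h
    · rw [max_eq_right h]
      exact cprY.trans (le_max_left _ _)
    · rw [max_eq_left h]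
      exact cprX.trans (le_max_right _ _)
  refine ⟨?_, c2⟩
  calc 2 * ‖directSum X Y‖ ≤ 2 * max ‖X‖ ‖Y‖ := by
        have := norm_directSum_le X Y; linarith
  _ ≤ max ‖N‖ ‖M‖ := c2
  _ ≤ ‖directSum N M‖ := max_le (le_norm_directSum_left N M) (le_norm_directSum_right N M)
end

section
/- For an invertible bounded operator S on a complex Hilbert space and a bounded operator X, max{‖S X S⁻¹ + S*⁻¹ X S*‖, ‖S* X S*⁻¹ + S⁻¹ X S‖} ≥ 2‖X‖. -/
open ContinuousLinearMap NormedSpace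
open scoped InnerProductSpace

set_option maxHeartbeats 1000000

variable {H : Type*} [NormedAddCommGroup H] [InnerProductSpace ℂ H] [CompleteSpace H]

lemma agm_aux (s si X A : H →L[ℂ] H) (hsi : si * s = 1)
    (hC : star s * A * s = (star s * s) * X + X * (star s * s)) :
    2 * ‖X‖ ≤ ‖A‖ := by
  by_cases hzero : si = 0
  · have h1 : (1 : H →L[ℂ] H) = 0 := by rw [← hsi, hzero, zero_mul]
    have hX : X = 0 := by rw [← one_mul X, h1, zero_mul]
    rw [hX]
    simpa using norm_nonneg A
  have hc : 0 < ‖si‖ := norm_pos_iff.mpr hzero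
  set ε : ℝ := (‖si‖ ^ 2)⁻¹ with hε_def
  have hε : 0 < ε := by positivity
  set T : H →L[ℂ] H := star s * s with hT_def
  have hlow : ∀ y : H, ε * ‖y‖ ^ 2 ≤ ‖s y‖ ^ 2 := by
    intro y
    have h1 : si (s y) = y := by rw [← ContinuousLinearMap.mul_apply, hsi, ContinuousLinearMap.one_apply]
    have h2 : ‖y‖ ≤ ‖si‖ * ‖s y‖ := by
      conv_lhs => rw [← h1]
      exact le_opNorm si (s y)
    have h3 : ‖y‖ ^ 2 ≤ ‖si‖ ^ 2 * ‖s y‖ ^ 2 := by nlinarith [norm_nonneg y, norm_nonneg (s y)]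
    rw [hε_def, inv_mul_le_iff₀ (by positivity)]
    linarith
  have hTinner : ∀ w z : H, ⟪T w, z⟫_ℂ = ⟪s w, s z⟫_ℂ := by
    intro w z
    show ⟪(star s) (s w), z⟫_ℂ = _
    rw [star_eq_adjoint, adjoint_inner_left]
  have hTinner' : ∀ w z : H, ⟪w, T z⟫_ℂ = ⟪s w, s z⟫_ℂ := by
    intro w z
    rw [← inner_conj_symm, hTinner, inner_conj_symm]
  have hCinner : ∀ w z : H, ⟪(T * X + X * T) w, z⟫_ℂ = ⟪A (s w), s z⟫_ℂ := by
    intro w z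
    rw [← hC]
    show ⟪(star s) ((A * s) w), z⟫_ℂ = _
    rw [star_eq_adjoint, adjoint_inner_left]
    rfl
  set E : ℝ → (H →L[ℂ] H) := fun t => NormedSpace.exp (t • (-T)) with hE_def
  have hE0 : E 0 = 1 := by
    rw [hE_def]
    simp only [zero_smul]
    exact exp_zero
  have hEd : ∀ (t : ℝ) (w : H), HasDerivAt (fun t => E t w) (-(T (E t w))) t := by
    intro t w
    have h1 : HasDerivAt E ((-T) * E t) t := hasDerivAt_exp_smul_const' (-T) t
    have h2 := (((ContinuousLinearMap.apply ℂ H) w).restrictScalars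
      ℝ).hasFDerivAt.comp_hasDerivAt t h1
    simpa [ContinuousLinearMap.mul_apply, Function.comp_def] using h2
  have hEwcont : ∀ w : H, Continuous fun t => E t w := by
    intro w
    apply continuous_iff_continuousAt.mpr
    intro t
    exact (hEd t w).continuousAt
  have hFd : ∀ (u : H) (t : ℝ),
      HasDerivAt (fun t => ‖E t u‖ ^ 2) (-(2 * ‖s (E t u)‖ ^ 2)) t := by
    intro u t
    have h1 := (hEd t u).inner ℂ (hEd t u)
    have h2 := Complex.reCLM.hasFDerivAt.comp_hasDerivAt t h1
    have h3 : (fun r => Complex.reCLM ⟪E r u, E r u⟫_ℂ) = fun r => ‖E r u‖ ^ 2 := by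
      funext r
      simp only [Complex.reCLM_apply]
      exact inner_self_eq_norm_sq (𝕜 := ℂ) (E r u)
    have h4 : Complex.reCLM (⟪E t u, -(T (E t u))⟫_ℂ + ⟪-(T (E t u)), E t u⟫_ℂ)
        = -(2 * ‖s (E t u)‖ ^ 2) := by
      rw [inner_neg_right, inner_neg_left, hTinner, hTinner']
      have h5 : ⟪s (E t u), s (E t u)⟫_ℂ = ((‖s (E t u)‖ ^ 2 : ℝ) : ℂ) := by
        rw [inner_self_eq_norm_sq_to_K]
        norm_cast
      rw [h5]
      simp only [map_add, map_neg, Complex.reCLM_apply, Complex.ofReal_re]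
      ring
    rw [h4] at h2
    rw [← h3]
    exact h2
  have hscont : ∀ u : H, Continuous fun t => ‖s (E t u)‖ ^ 2 := fun u =>
    ((s.continuous.comp (hEwcont u)).norm.pow 2)
  have hsq : ∀ (u : H) (N : ℝ), 0 ≤ N →
      (∫ t in (0:ℝ)..N, ‖s (E t u)‖ ^ 2) ≤ ‖u‖ ^ 2 / 2 := by
    intro u N hN
    have hcont : Continuous fun t => -(2 * ‖s (E t u)‖ ^ 2) := by
      have := hscont u
      fun_prop
    have hFTC : (∫ t in (0:ℝ)..N, -(2 * ‖s (E t u)‖ ^ 2))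
        = ‖E N u‖ ^ 2 - ‖E 0 u‖ ^ 2 :=
      intervalIntegral.integral_eq_sub_of_hasDerivAt (fun t _ => hFd u t)
        (hcont.intervalIntegrable 0 N)
    rw [intervalIntegral.integral_neg, intervalIntegral.integral_const_mul] at hFTC
    have h3 : ‖E 0 u‖ ^ 2 = ‖u‖ ^ 2 := by rw [hE0]; simp
    nlinarith [sq_nonneg ‖E N u‖]
  have hdecay : ∀ (u : H) (N : ℝ), 0 ≤ N →
      ‖E N u‖ ^ 2 ≤ Real.exp (-(2 * ε * N)) * ‖u‖ ^ 2 := by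
    intro u N hN
    set ψ : ℝ → ℝ := fun t => Real.exp (2 * ε * t) * ‖E t u‖ ^ 2 with hψ_def
    have hψd : ∀ t : ℝ, HasDerivAt ψ
        (Real.exp (2 * ε * t) * (2 * ε) * ‖E t u‖ ^ 2
          + Real.exp (2 * ε * t) * (-(2 * ‖s (E t u)‖ ^ 2))) t := by
      intro t
      have he : HasDerivAt (fun t => Real.exp (2 * ε * t))
          (Real.exp (2 * ε * t) * (2 * ε)) t := by
        have h0 : HasDerivAt (fun t : ℝ => 2 * ε * t) (2 * ε) t := by
          simpa using (hasDerivAt_id t).const_mul (2 * ε)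
        simpa [mul_comm] using h0.exp
      exact he.mul (hFd u t)
    have hψ' : ∀ t : ℝ, deriv ψ t ≤ 0 := by
      intro t
      rw [(hψd t).deriv]
      have h1 := hlow (E t u)
      have h2 : (0:ℝ) < Real.exp (2 * ε * t) := Real.exp_pos _
      nlinarith
    have hanti : Antitone ψ :=
      antitone_of_deriv_nonpos (fun t => (hψd t).differentiableAt) hψ'
    have h1 : ψ N ≤ ψ 0 := hanti hN
    have h2 : ψ 0 = ‖u‖ ^ 2 := by
      rw [hψ_def]
      simp [hE0]
    rw [h2] at h1
    rw [Real.exp_neg, inv_mul_eq_div, le_div_iff₀ (Real.exp_pos _)]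
    calc ‖E N u‖ ^ 2 * Real.exp (2 * ε * N)
        = Real.exp (2 * ε * N) * ‖E N u‖ ^ 2 := by ring
      _ ≤ ‖u‖ ^ 2 := h1
  have hbound : ∀ u v : H, ‖⟪X u, v⟫_ℂ‖ ≤ ‖A‖ / 4 * (‖u‖ ^ 2 + ‖v‖ ^ 2) := by
    intro u v
    have hΦd : ∀ t : ℝ, HasDerivAt (fun t => ⟪X (E t u), E t v⟫_ℂ)
        (-⟪A (s (E t u)), s (E t v)⟫_ℂ) t := by
      intro t
      have h1 : HasDerivAt (fun t => X (E t u)) (X (-(T (E t u)))) t :=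
        (X.restrictScalars ℝ).hasFDerivAt.comp_hasDerivAt t (hEd t u)
      have h2 := h1.inner ℂ (hEd t v)
      have h3 : ⟪X (E t u), -(T (E t v))⟫_ℂ + ⟪X (-(T (E t u))), E t v⟫_ℂ
          = -⟪A (s (E t u)), s (E t v)⟫_ℂ := by
        rw [← hCinner]
        have h4 : ⟪X (E t u), T (E t v)⟫_ℂ = ⟪T (X (E t u)), E t v⟫_ℂ := by
          rw [hTinner, hTinner']
        rw [inner_neg_right, map_neg, inner_neg_left, h4]
        have h5 : (T * X + X * T) (E t u) = T (X (E t u)) + X (T (E t u)) := rfl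
        rw [h5, inner_add_left]
        ring
      rw [h3] at h2
      exact h2
    have hcontΦ' : Continuous fun t => -⟪A (s (E t u)), s (E t v)⟫_ℂ := by
      have h1 : Continuous fun t => A (s (E t u)) :=
        A.continuous.comp (s.continuous.comp (hEwcont u))
      have h2 : Continuous fun t => s (E t v) := s.continuous.comp (hEwcont v)
      exact (h1.inner h2).neg
    have hFTC : ∀ N : ℝ, (∫ t in (0:ℝ)..N, -⟪A (s (E t u)), s (E t v)⟫_ℂ)
        = ⟪X (E N u), E N v⟫_ℂ - ⟪X (E 0 u), E 0 v⟫_ℂ := fun N =>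
      intervalIntegral.integral_eq_sub_of_hasDerivAt (fun t _ => hΦd t)
        (hcontΦ'.intervalIntegrable 0 N)
    have key : ∀ N : ℝ, 0 ≤ N → ‖⟪X u, v⟫_ℂ‖
        ≤ ‖X‖ / 2 * (‖u‖ ^ 2 + ‖v‖ ^ 2) * Real.exp (-(2 * ε * N))
          + ‖A‖ / 4 * (‖u‖ ^ 2 + ‖v‖ ^ 2) := by
      intro N hN
      have h0 : ⟪X (E 0 u), E 0 v⟫_ℂ = ⟪X u, v⟫_ℂ := by rw [hE0]; simp
      have hsplit : ⟪X u, v⟫_ℂ = ⟪X (E N u), E N v⟫_ℂ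
          - ∫ t in (0:ℝ)..N, -⟪A (s (E t u)), s (E t v)⟫_ℂ := by
        rw [hFTC N, h0]; ring
      have hterm : ‖⟪X (E N u), E N v⟫_ℂ‖
          ≤ ‖X‖ / 2 * (‖u‖ ^ 2 + ‖v‖ ^ 2) * Real.exp (-(2 * ε * N)) := by
        have h1 : ‖⟪X (E N u), E N v⟫_ℂ‖ ≤ ‖X‖ * ‖E N u‖ * ‖E N v‖ := by
          calc ‖⟪X (E N u), E N v⟫_ℂ‖ ≤ ‖X (E N u)‖ * ‖E N v‖ := norm_inner_le_norm _ _
            _ ≤ ‖X‖ * ‖E N u‖ * ‖E N v‖ :=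
              mul_le_mul_of_nonneg_right (le_opNorm X _) (norm_nonneg _)
        have h3 := hdecay u N hN
        have h4 := hdecay v N hN
        nlinarith [norm_nonneg X, norm_nonneg (E N u), norm_nonneg (E N v),
          sq_nonneg (‖E N u‖ - ‖E N v‖), Real.exp_pos (-(2 * ε * N)),
          mul_le_mul_of_nonneg_left (add_le_add h3 h4) (div_nonneg (norm_nonneg X) two_pos.le),
          mul_le_mul_of_nonneg_left (sq_nonneg (‖E N u‖ - ‖E N v‖)) (norm_nonneg X)]
      have hIbound : ‖∫ t in (0:ℝ)..N, -⟪A (s (E t u)), s (E t v)⟫_ℂ‖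
          ≤ ‖A‖ / 4 * (‖u‖ ^ 2 + ‖v‖ ^ 2) := by
        have hptw : ∀ t : ℝ, ‖-⟪A (s (E t u)), s (E t v)⟫_ℂ‖
            ≤ ‖A‖ / 2 * (‖s (E t u)‖ ^ 2 + ‖s (E t v)‖ ^ 2) := by
          intro t
          rw [norm_neg]
          have h1 : ‖⟪A (s (E t u)), s (E t v)⟫_ℂ‖ ≤ ‖A‖ * ‖s (E t u)‖ * ‖s (E t v)‖ := by
            calc ‖⟪A (s (E t u)), s (E t v)⟫_ℂ‖ ≤ ‖A (s (E t u))‖ * ‖s (E t v)‖ :=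
                norm_inner_le_norm _ _
              _ ≤ ‖A‖ * ‖s (E t u)‖ * ‖s (E t v)‖ :=
                mul_le_mul_of_nonneg_right (le_opNorm A _) (norm_nonneg _)
          nlinarith [norm_nonneg A, norm_nonneg (s (E t u)), norm_nonneg (s (E t v)),
            mul_le_mul_of_nonneg_left (sq_nonneg (‖s (E t u)‖ - ‖s (E t v)‖)) (norm_nonneg A)]
        have hint1 : IntervalIntegrable (fun t => ‖-⟪A (s (E t u)), s (E t v)⟫_ℂ‖)
            MeasureTheory.volume 0 N := hcontΦ'.norm.intervalIntegrable 0 N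
        have hint2 : IntervalIntegrable
            (fun t => ‖A‖ / 2 * (‖s (E t u)‖ ^ 2 + ‖s (E t v)‖ ^ 2))
            MeasureTheory.volume 0 N :=
          (continuous_const.mul ((hscont u).add (hscont v))).intervalIntegrable 0 N
        calc ‖∫ t in (0:ℝ)..N, -⟪A (s (E t u)), s (E t v)⟫_ℂ‖
            ≤ ∫ t in (0:ℝ)..N, ‖-⟪A (s (E t u)), s (E t v)⟫_ℂ‖ :=
              intervalIntegral.norm_integral_le_integral_norm hN
          _ ≤ ∫ t in (0:ℝ)..N, ‖A‖ / 2 * (‖s (E t u)‖ ^ 2 + ‖s (E t v)‖ ^ 2) :=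
              intervalIntegral.integral_mono_on hN hint1 hint2 (fun t _ => hptw t)
          _ = ‖A‖ / 2 * ((∫ t in (0:ℝ)..N, ‖s (E t u)‖ ^ 2)
                + ∫ t in (0:ℝ)..N, ‖s (E t v)‖ ^ 2) := by
              rw [intervalIntegral.integral_const_mul, intervalIntegral.integral_add
                ((hscont u).intervalIntegrable 0 N) ((hscont v).intervalIntegrable 0 N)]
          _ ≤ ‖A‖ / 2 * (‖u‖ ^ 2 / 2 + ‖v‖ ^ 2 / 2) := by
              gcongr
              · exact hsq u N hN
              · exact hsq v N hN
          _ = ‖A‖ / 4 * (‖u‖ ^ 2 + ‖v‖ ^ 2) := by ring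
      calc ‖⟪X u, v⟫_ℂ‖ = ‖⟪X (E N u), E N v⟫_ℂ
            - ∫ t in (0:ℝ)..N, -⟪A (s (E t u)), s (E t v)⟫_ℂ‖ := by rw [← hsplit]
        _ ≤ ‖⟪X (E N u), E N v⟫_ℂ‖
            + ‖∫ t in (0:ℝ)..N, -⟪A (s (E t u)), s (E t v)⟫_ℂ‖ := norm_sub_le _ _
        _ ≤ ‖X‖ / 2 * (‖u‖ ^ 2 + ‖v‖ ^ 2) * Real.exp (-(2 * ε * N))
            + ‖A‖ / 4 * (‖u‖ ^ 2 + ‖v‖ ^ 2) := add_le_add hterm hIbound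
    have htend : Filter.Tendsto
        (fun N : ℝ => ‖X‖ / 2 * (‖u‖ ^ 2 + ‖v‖ ^ 2) * Real.exp (-(2 * ε * N))
          + ‖A‖ / 4 * (‖u‖ ^ 2 + ‖v‖ ^ 2)) Filter.atTop
        (nhds (‖X‖ / 2 * (‖u‖ ^ 2 + ‖v‖ ^ 2) * 0 + ‖A‖ / 4 * (‖u‖ ^ 2 + ‖v‖ ^ 2))) := by
      apply Filter.Tendsto.add_const
      apply Filter.Tendsto.const_mul
      have h2ε : Filter.Tendsto (fun N : ℝ => 2 * ε * N) Filter.atTop Filter.atTop :=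
        Filter.Tendsto.const_mul_atTop (by positivity) Filter.tendsto_id
      have hneg : Filter.Tendsto (fun N : ℝ => -(2 * ε * N)) Filter.atTop Filter.atBot :=
        Filter.tendsto_neg_atBot_iff.mpr h2ε
      exact Real.tendsto_exp_atBot.comp hneg
    have hlim := ge_of_tendsto htend
      (Filter.eventually_atTop.mpr ⟨0, fun N hN => key N hN⟩)
    calc ‖⟪X u, v⟫_ℂ‖ ≤ ‖X‖ / 2 * (‖u‖ ^ 2 + ‖v‖ ^ 2) * 0
          + ‖A‖ / 4 * (‖u‖ ^ 2 + ‖v‖ ^ 2) := hlim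
      _ = ‖A‖ / 4 * (‖u‖ ^ 2 + ‖v‖ ^ 2) := by ring
  have hXnorm : ∀ w : H, ‖X w‖ ≤ ‖A‖ / 2 * ‖w‖ := by
    intro w
    rcases eq_or_ne (X w) 0 with h | h
    · rw [h, norm_zero]
      positivity
    have hw : w ≠ 0 := by rintro rfl; simp at h
    have hwp : 0 < ‖w‖ := norm_pos_iff.mpr hw
    have hXwp : 0 < ‖X w‖ := norm_pos_iff.mpr h
    set r : ℝ := Real.sqrt (‖X w‖ / ‖w‖) with hr_def
    have hrp : 0 < r := Real.sqrt_pos.mpr (by positivity)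
    have hr2 : r ^ 2 = ‖X w‖ / ‖w‖ := Real.sq_sqrt (by positivity)
    have h1 := hbound ((r : ℂ) • w) (((r⁻¹ : ℝ) : ℂ) • X w)
    have h2 : ⟪X ((r : ℂ) • w), ((r⁻¹ : ℝ) : ℂ) • X w⟫_ℂ = ⟪X w, X w⟫_ℂ := by
      rw [map_smul, inner_smul_left, inner_smul_right, Complex.conj_ofReal, ← mul_assoc,
        ← Complex.ofReal_mul, mul_inv_cancel₀ hrp.ne', Complex.ofReal_one, one_mul]
    have h3 : ‖⟪X w, X w⟫_ℂ‖ = ‖X w‖ ^ 2 := by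
      rw [inner_self_eq_norm_sq_to_K, norm_pow, RCLike.norm_ofReal,
        abs_of_nonneg (norm_nonneg _)]
    have h4 : ‖(r : ℂ) • w‖ = r * ‖w‖ := by
      rw [norm_smul, Complex.norm_real, Real.norm_eq_abs, abs_of_pos hrp]
    have h5 : ‖((r⁻¹ : ℝ) : ℂ) • X w‖ = r⁻¹ * ‖X w‖ := by
      rw [norm_smul, Complex.norm_real, Real.norm_eq_abs, abs_of_pos (by positivity)]
    rw [h2, h3, h4, h5] at h1
    have h6 : (r * ‖w‖) ^ 2 = ‖X w‖ * ‖w‖ := by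
      rw [mul_pow, hr2]
      field_simp
    have h7 : (r⁻¹ * ‖X w‖) ^ 2 = ‖w‖ * ‖X w‖ := by
      rw [mul_pow, inv_pow, hr2]
      field_simp
    rw [h6, h7] at h1
    have h8 : ‖X w‖ ^ 2 ≤ ‖A‖ / 2 * (‖w‖ * ‖X w‖) := by
      calc ‖X w‖ ^ 2 ≤ ‖A‖ / 4 * (‖X w‖ * ‖w‖ + ‖w‖ * ‖X w‖) := h1
        _ = ‖A‖ / 2 * (‖w‖ * ‖X w‖) := by ring
    nlinarith
  have h9 := opNorm_le_bound X (by positivity) hXnorm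
  linarith

open ContinuousLinearMap

theorem stmt15 (S : (H →L[ℂ] H)ˣ) (X : H →L[ℂ] H) :
    2 * ‖X‖ ≤ max
      ‖(S : H →L[ℂ] H) * X * (↑S⁻¹ : H →L[ℂ] H) +
        adjoint (↑S⁻¹ : H →L[ℂ] H) * X * adjoint (S : H →L[ℂ] H)‖
      ‖adjoint (S : H →L[ℂ] H) * X * adjoint (↑S⁻¹ : H →L[ℂ] H) +
        (↑S⁻¹ : H →L[ℂ] H) * X * (S : H →L[ℂ] H)‖ := by
  refine le_trans ?_ (le_max_left _ _)
  have h1 : (↑S⁻¹ : H →L[ℂ] H) * (S : H →L[ℂ] H) = 1 := Units.inv_mul S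
  have h2 : (S : H →L[ℂ] H) * (↑S⁻¹ : H →L[ℂ] H) = 1 := Units.mul_inv S
  apply agm_aux (S : H →L[ℂ] H) (↑S⁻¹ : H →L[ℂ] H) X _ h1
  rw [← star_eq_adjoint, ← star_eq_adjoint]
  have h3 : star (S : H →L[ℂ] H) * star (↑S⁻¹ : H →L[ℂ] H) = 1 := by
    rw [← star_mul, h1, star_one]
  simp only [mul_add, add_mul, mul_assoc]
  rw [h1, mul_one]
  rw [show star (S : H →L[ℂ] H) * (star (↑S⁻¹ : H →L[ℂ] H) *
      (X * (star (S : H →L[ℂ] H) * (S : H →L[ℂ] H))))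
    = (star (S : H →L[ℂ] H) * star (↑S⁻¹ : H →L[ℂ] H)) *
      (X * (star (S : H →L[ℂ] H) * (S : H →L[ℂ] H))) from (mul_assoc _ _ _).symm, h3, one_mul]
end

section
/- For an invertible bounded operator S on a complex Hilbert space and a bounded operator X, max{‖S X S*⁻¹ + S*⁻¹ X S‖, ‖S* X S⁻¹ + S⁻¹ X S*‖} ≥ 2‖X‖. -/
set_option synthInstance.maxHeartbeats 1000000
set_option maxHeartbeats 2000000

open ContinuousLinearMap
open scoped InnerProductSpace

variable {H : Type*} [NormedAddCommGroup H] [InnerProductSpace ℂ H] [CompleteSpace H]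


private lemma auxK (a b : ℝ) (h : 1 ≤ a * b) (ha : 0 ≤ a) (hb : 0 ≤ b) : 2 ≤ a + b := by
  nlinarith [sq_nonneg (a - b)]

private lemma auxX (x : ℝ) (hx : 0 < x) : 2 ≤ x + x⁻¹ := by
  nlinarith [sq_nonneg (x - 1), mul_inv_cancel₀ hx.ne']

private lemma auxB (B K : ℝ) (hB0 : 0 ≤ B) (hK : 0 < K) (hBsq : B ^ 2 ≤ 1 - 4 / K ^ 2) :
    B < 1 := by
  nlinarith [div_pos (by norm_num : (0:ℝ) < 4) (pow_pos hK 2)]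

private lemma aux_uw (u w vn bu bw B : ℝ) (hu : 0 ≤ u) (hw : 0 ≤ w)
    (hbu0 : 0 ≤ bu) (hbw0 : 0 ≤ bw) (hvn : vn ≤ 1) (hvn0 : 0 ≤ vn)
    (hbu : bu ≤ B) (hbw : bw ≤ B) (hB : B < 1) (hB0 : 0 ≤ B)
    (hu2 : u ^ 2 = vn ^ 2 - bu ^ 2) (hw2 : w ^ 2 = 1 - bw ^ 2) :
    u * w ≤ 1 - bu * bw := by
  have hw1 : bw ^ 2 ≤ 1 := by nlinarith
  have h1 : u ^ 2 * w ^ 2 ≤ (1 - bu ^ 2) * (1 - bw ^ 2) := by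
    rw [hu2, hw2]
    have hx : (0:ℝ) ≤ (1 - vn ^ 2) * (1 - bw ^ 2) :=
      mul_nonneg (by nlinarith) (by linarith)
    nlinarith [hx]
  have h2 : (1 - bu ^ 2) * (1 - bw ^ 2) ≤ (1 - bu * bw) ^ 2 := by
    nlinarith [sq_nonneg (bu - bw)]
  have h3 : 0 < 1 - bu * bw := by nlinarith
  have h4 : (u * w) ^ 2 ≤ (1 - bu * bw) ^ 2 := by nlinarith [h1, h2]
  nlinarith [h4, h3, mul_nonneg hu hw]

private lemma aux_final (Z Yn Yv B q e e' : ℝ) (hZ0 : 0 ≤ Z) (hq0 : 0 ≤ q)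
    (hqB : q ≤ B ^ 2) (hB1 : B ^ 2 < 1) (he : 0 < e) (he' : e' ≤ e * (1 - B ^ 2) / 2)
    (hv2 : Yn - e' < Yv) (hmain : 2 * Yv - 2 * (Yn * q) ≤ Z * (1 - q)) :
    2 * Yn ≤ Z + e := by
  by_contra hcon
  push_neg at hcon
  have hq1 : q < 1 := lt_of_le_of_lt hqB hB1
  have key : (2 * Yn - Z - e) * (1 - q) ≤ 0 := by
    nlinarith [mul_le_mul_of_nonneg_left hqB he.le]
  nlinarith [mul_pos (by linarith : (0:ℝ) < 2 * Yn - Z - e)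
    (by linarith : (0:ℝ) < 1 - q)]

lemma sa_move (A : H →L[ℂ] H) (hA : IsSelfAdjoint A) (x y : H) :
    ⟪x, A y⟫_ℂ = ⟪A x, y⟫_ℂ := by
  conv_rhs => rw [← hA, star_eq_adjoint, adjoint_inner_left]

lemma lemA (p p' Y : H →L[ℂ] H) (hp : 0 ≤ p) (h1 : p * p' = 1) (h2 : p' * p = 1) :
    2 * ‖Y‖ ≤ ‖p * Y * p' + p' * Y * p‖ := by
  rcases (norm_nonneg Y).eq_or_lt with h0 | hY
  · rw [← h0]; simpa using norm_nonneg _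
  have hYne : Y ≠ 0 := by intro h; rw [h] at hY; simp at hY
  obtain ⟨v₀, hv₀⟩ : ∃ x, Y x ≠ 0 := by
    by_contra hcon; push_neg at hcon
    exact hYne (by ext x; simp [hcon x])
  haveI : Nontrivial H := nontrivial_of_ne v₀ 0 (by rintro rfl; simp at hv₀)
  set Z := p * Y * p' + p' * Y * p with hZdef
  have hpsa : IsSelfAdjoint p := IsSelfAdjoint.of_nonneg hp
  have hpu : IsUnit p := isUnit_iff_exists.mpr ⟨p', h1, h2⟩
  have hσpos : ∀ x ∈ spectrum ℝ p, 0 < x := by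
    intro x hx
    rcases (spectrum_nonneg_of_nonneg hp hx).eq_or_lt with h | h
    · exact absurd (h ▸ hx) (spectrum.zero_notMem ℝ hpu)
    · exact h
  have hMn : ∀ x ∈ spectrum ℝ p, x ≤ ‖p‖ := fun x hx =>
    (le_abs_self x).trans (spectrum.norm_le_norm_of_mem hx)
  have hMi : ∀ x ∈ spectrum ℝ p, x⁻¹ ≤ ‖p'‖ := by
    intro x hx
    have hx0 := hσpos x hx
    have hmem : ((Units.mk0 x hx0.ne' : ℝˣ) : ℝ) ∈
        spectrum ℝ ((⟨p, p', h1, h2⟩ : (H →L[ℂ] H)ˣ) : H →L[ℂ] H) := hx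
    have h' := spectrum.norm_le_norm_of_mem (spectrum.inv_mem_iff.mp hmem)
    simpa [abs_inv, abs_of_pos hx0] using h'
  have hMprod : 1 ≤ ‖p‖ * ‖p'‖ := by
    calc (1:ℝ) = ‖(1 : H →L[ℂ] H)‖ := by rw [norm_one]
    _ = ‖p * p'‖ := by rw [h1]
    _ ≤ ‖p‖ * ‖p'‖ := norm_mul_le p p'
  have hMn0 : (0:ℝ) ≤ ‖p‖ := norm_nonneg _
  have hMi0 : (0:ℝ) ≤ ‖p'‖ := norm_nonneg _
  set K := ‖p‖ + ‖p'‖ with hKdef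
  have hK2 : 2 ≤ K := by rw [hKdef]; exact auxK _ _ hMprod hMn0 hMi0
  set c : ℝ → ℝ := fun x => (x + x⁻¹)/2 with hcdef
  set s : ℝ → ℝ := fun x => (x - x⁻¹)/2 with hsdef
  set n : ℝ → ℝ := fun x => (c x)⁻¹ with hndef
  have hc1 : ∀ x ∈ spectrum ℝ p, 1 ≤ c x := by
    intro x hx
    have hx0 := hσpos x hx
    have h2x : 2 ≤ x + x⁻¹ := auxX x hx0
    simp only [hcdef]; linarith
  have hKx : ∀ x ∈ spectrum ℝ p, x + x⁻¹ ≤ K := fun x hx =>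
    add_le_add (hMn x hx) (hMi x hx)
  have hcont_inv : ContinuousOn (fun x : ℝ => x⁻¹) (spectrum ℝ p) :=
    ContinuousOn.inv₀ continuousOn_id fun x hx => (hσpos x hx).ne'
  have hc_cont : ContinuousOn c (spectrum ℝ p) := (continuousOn_id.add hcont_inv).div_const 2
  have hs_cont : ContinuousOn s (spectrum ℝ p) := (continuousOn_id.sub hcont_inv).div_const 2
  have hn_cont : ContinuousOn n (spectrum ℝ p) :=
    ContinuousOn.inv₀ hc_cont fun x hx => by linarith [hc1 x hx]
  set C := cfc c p with hCdef
  set Sh := cfc s p with hShdef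
  set N := cfc n p with hNdef
  have hCsa : IsSelfAdjoint C := cfc_predicate c p
  have hShsa : IsSelfAdjoint Sh := cfc_predicate s p
  -- C + Sh = p
  have hCS : C + Sh = p := by
    rw [hCdef, hShdef, ← cfc_add (a := p) c s hc_cont hs_cont]
    calc cfc (fun x => c x + s x) p = cfc (fun x : ℝ => x) p := by
          apply cfc_congr; intro x _; simp only [hcdef, hsdef]; ring
    _ = p := cfc_id' ℝ p
  -- C - Sh = p'
  have hD : p * cfc (fun x : ℝ => x⁻¹) p = 1 := by
    have e0 : cfc (fun x : ℝ => x) p = p := cfc_id' ℝ p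
    have e1 := cfc_mul (fun x : ℝ => x) (fun x : ℝ => x⁻¹) p continuousOn_id hcont_inv
    rw [e0] at e1
    rw [← e1]
    calc cfc (fun x : ℝ => x * x⁻¹) p = cfc (fun _ : ℝ => (1:ℝ)) p := by
          apply cfc_congr; intro x hx; exact mul_inv_cancel₀ (hσpos x hx).ne'
    _ = 1 := by rw [← cfc_one (R := ℝ) p]; rfl
  have hCmS : C - Sh = p' := by
    have e1 : C - Sh = cfc (fun x : ℝ => x⁻¹) p := by
      rw [hCdef, hShdef, ← cfc_sub c s p hc_cont hs_cont]
      apply cfc_congr; intro x _; simp only [hcdef, hsdef]; ring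
    have e2 : p' = cfc (fun x : ℝ => x⁻¹) p := by
      calc p' = p' * (p * cfc (fun x : ℝ => x⁻¹) p) := by rw [hD, mul_one]
      _ = (p' * p) * cfc (fun x : ℝ => x⁻¹) p := by rw [mul_assoc]
      _ = cfc (fun x : ℝ => x⁻¹) p := by rw [h2, one_mul]
    rw [e1, e2]
  -- C * N = 1
  have hcn : ∀ x ∈ spectrum ℝ p, c x ≠ 0 := fun x hx => by linarith [hc1 x hx]
  have hCN : C * N = 1 := by
    rw [hCdef, hNdef, ← cfc_mul c n p hc_cont hn_cont]
    calc cfc (fun x => c x * n x) p = cfc (fun _ : ℝ => (1:ℝ)) p := by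
          apply cfc_congr; intro x hx; simp only [hndef]; exact mul_inv_cancel₀ (hcn x hx)
    _ = 1 := by rw [← cfc_one (R := ℝ) p]; rfl
  -- C*C - Sh*Sh = 1
  have hsq : C * C - Sh * Sh = 1 := by
    rw [hCdef, hShdef, ← cfc_mul c c p hc_cont hc_cont, ← cfc_mul s s p hs_cont hs_cont,
      ← cfc_sub (fun x => c x * c x) (fun x => s x * s x) p
        (hc_cont.mul hc_cont) (hs_cont.mul hs_cont)]
    calc cfc (fun x => c x * c x - s x * s x) p = cfc (fun _ : ℝ => (1:ℝ)) p := by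
          apply cfc_congr; intro x hx
          have hx0 := (hσpos x hx).ne'
          simp only [hcdef, hsdef]
          field_simp
          ring
    _ = 1 := by rw [← cfc_one (R := ℝ) p]; rfl
  -- T = Sh * N and its norm bound
  set B := Real.sqrt (1 - 4/K^2) with hBdef
  have hB0 : 0 ≤ B := Real.sqrt_nonneg _
  have hK0 : (0:ℝ) < K := by linarith
  have h4K : 0 < 4/K^2 := by positivity
  have h4K1 : 4/K^2 ≤ 1 := by
    rw [div_le_one (by positivity)]; nlinarith
  have hBsq : B^2 ≤ 1 - 4/K^2 := by
    rw [hBdef, Real.sq_sqrt (by linarith)]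
  have hB1 : B < 1 := auxB B K hB0 hK0 hBsq
  have hT : ‖Sh * N‖ ≤ B := by
    rw [hShdef, hNdef, ← cfc_mul s n p hs_cont hn_cont]
    apply norm_cfc_le hB0
    intro x hx
    have hx0 := hσpos x hx
    have hxK := hKx x hx
    have hcx := hc1 x hx
    have hxx : 0 < x + x⁻¹ := by positivity
    rw [Real.norm_eq_abs]
    apply Real.abs_le_sqrt
    have : (s x * n x)^2 = 1 - 4/(x+x⁻¹)^2 := by
      simp only [hsdef, hndef, hcdef]
      have h1' : x ≠ 0 := hx0.ne'
      have h2' : x + x⁻¹ ≠ 0 := hxx.ne'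
      field_simp
      ring
    rw [this]
    have : 4/K^2 ≤ 4/(x+x⁻¹)^2 := by
      apply div_le_div_of_nonneg_left (by norm_num) (by positivity)
      nlinarith
    linarith
  have hN1 : ‖N‖ ≤ 1 := by
    rw [hNdef]
    apply norm_cfc_le zero_le_one
    intro x hx
    rw [Real.norm_eq_abs, hndef, abs_inv, abs_of_pos (by linarith [hc1 x hx])]
    have := hc1 x hx
    rw [inv_le_one_iff₀]; right; exact this

  have hZ0 : (0:ℝ) ≤ ‖Z‖ := norm_nonneg _
  have hp'sa : IsSelfAdjoint p' := hCmS ▸ (hCsa.sub hShsa)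
  have hB2lt : B^2 < 1 := by nlinarith [hB0, hB1]
  -- pointwise norm identity
  have hnorm : ∀ z : H, ‖C z‖^2 - ‖Sh z‖^2 = ‖z‖^2 := by
    intro z
    have e1 : ⟪C z, C z⟫_ℂ = ⟪z, C (C z)⟫_ℂ := (sa_move C hCsa z (C z)).symm
    have e2 : ⟪Sh z, Sh z⟫_ℂ = ⟪z, Sh (Sh z)⟫_ℂ := (sa_move Sh hShsa z (Sh z)).symm
    have e3 : C (C z) - Sh (Sh z) = z := by
      have := congrArg (fun A : H →L[ℂ] H => A z) hsq
      simpa [ContinuousLinearMap.sub_apply, ContinuousLinearMap.mul_apply,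
        ContinuousLinearMap.one_apply] using this
    have e4 : ⟪C z, C z⟫_ℂ - ⟪Sh z, Sh z⟫_ℂ = ⟪z, z⟫_ℂ := by
      rw [e1, e2, ← inner_sub_right, e3]
    rw [inner_self_eq_norm_sq_to_K, inner_self_eq_norm_sq_to_K,
      inner_self_eq_norm_sq_to_K] at e4
    exact_mod_cast e4
  apply le_of_forall_pos_le_add
  intro ε hε
  set ε' : ℝ := min (ε * (1 - B^2) / 2) (‖Y‖/2) with hε'def
  have h1B : (0:ℝ) < 1 - B^2 := by linarith
  have hε'pos : 0 < ε' := lt_min (by nlinarith [mul_pos hε h1B]) (by linarith)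
  have hε'le : ε' ≤ ε * (1 - B^2)/2 := min_le_left _ _
  have hε'Y : ε' ≤ ‖Y‖/2 := min_le_right _ _
  obtain ⟨v, hv1, hv2⟩ : ∃ v : H, ‖v‖ ≤ 1 ∧ ‖Y‖ - ε' < ‖Y v‖ := by
    by_contra hcon
    push_neg at hcon
    have : ‖Y‖ ≤ ‖Y‖ - ε' := by
      apply ContinuousLinearMap.opNorm_le_bound _ (by linarith)
      intro x
      rcases eq_or_ne x 0 with rfl | hx
      · simp
      · have hxn : (0:ℝ) < ‖x‖ := norm_pos_iff.mpr hx
        have h := hcon (‖x‖⁻¹ • x) (by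
          rw [norm_smul, Real.norm_eq_abs, abs_of_pos (inv_pos.mpr hxn)]
          rw [inv_mul_cancel₀ hxn.ne'])
        rw [ContinuousLinearMap.map_smul_of_tower, norm_smul, Real.norm_eq_abs,
          abs_of_pos (inv_pos.mpr hxn)] at h
        calc ‖Y x‖ = ‖x‖ * (‖x‖⁻¹ * ‖Y x‖) := by field_simp
        _ ≤ ‖x‖ * (‖Y‖ - ε') := by
            apply mul_le_mul_of_nonneg_left h hxn.le
        _ = (‖Y‖ - ε') * ‖x‖ := by ring
    linarith
  have hYv : (0:ℝ) < ‖Y v‖ := by linarith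
  set v' : H := ((‖Y v‖ : ℂ))⁻¹ • (Y v) with hv'def
  have hv'1 : ‖v'‖ = 1 := by
    rw [hv'def, norm_smul, norm_inv, Complex.norm_real, Real.norm_eq_abs,
      abs_of_pos hYv, inv_mul_cancel₀ hYv.ne']
  set u : H := N v with hudef
  set w : H := N v' with hwdef
  have ha : C u = v := by
    have := congrArg (fun A : H →L[ℂ] H => A v) hCN
    simpa [ContinuousLinearMap.mul_apply, ContinuousLinearMap.one_apply] using this
  have ha' : C w = v' := by
    have := congrArg (fun A : H →L[ℂ] H => A v') hCN
    simpa [ContinuousLinearMap.mul_apply, ContinuousLinearMap.one_apply] using this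
  -- apply-level decompositions
  have hpu' : p u = v + Sh u := by
    rw [← hCS]; rw [ContinuousLinearMap.add_apply, ha]
  have hp'u : p' u = v - Sh u := by
    rw [← hCmS]; rw [ContinuousLinearMap.sub_apply, ha]
  have hpw : p w = v' + Sh w := by
    rw [← hCS]; rw [ContinuousLinearMap.add_apply, ha']
  have hp'w : p' w = v' - Sh w := by
    rw [← hCmS]; rw [ContinuousLinearMap.sub_apply, ha']
  have hZu : Z u = p (Y (p' u)) + p' (Y (p u)) := by
    rw [hZdef]
    simp [ContinuousLinearMap.add_apply, ContinuousLinearMap.mul_apply]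
  have hinner : ⟪w, Z u⟫_ℂ = 2 * ⟪v', Y v⟫_ℂ - 2 * ⟪Sh w, Y (Sh u)⟫_ℂ := by
    rw [hZu, inner_add_right, sa_move p hpsa w _, sa_move p' hp'sa w _,
      hpu', hp'u, hpw, hp'w]
    rw [map_sub, map_add, inner_add_left, inner_sub_left, inner_sub_right,
      inner_sub_right, inner_add_right, inner_add_right]
    ring
  have hbu : ‖Sh u‖ ≤ B := by
    have : Sh u = (Sh * N) v := by rw [ContinuousLinearMap.mul_apply, hudef]
    rw [this]
    calc ‖(Sh * N) v‖ ≤ ‖Sh * N‖ * ‖v‖ := ContinuousLinearMap.le_opNorm _ _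
    _ ≤ B * 1 := mul_le_mul hT hv1 (norm_nonneg _) hB0
    _ = B := mul_one B
  have hbw : ‖Sh w‖ ≤ B := by
    have : Sh w = (Sh * N) v' := by rw [ContinuousLinearMap.mul_apply, hwdef]
    rw [this]
    calc ‖(Sh * N) v'‖ ≤ ‖Sh * N‖ * ‖v'‖ := ContinuousLinearMap.le_opNorm _ _
    _ = ‖Sh * N‖ := by rw [hv'1, mul_one]
    _ ≤ B := hT
  have hu2 : ‖u‖^2 = ‖v‖^2 - ‖Sh u‖^2 := by
    have := hnorm u; rw [ha] at this; linarith
  have hw2 : ‖w‖^2 = 1 - ‖Sh w‖^2 := by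
    have := hnorm w; rw [ha', hv'1, one_pow] at this; linarith
  have t1' : ‖⟪v', Y v⟫_ℂ‖ = ‖Y v‖ := by
    rw [hv'def, inner_smul_left, inner_self_eq_norm_sq_to_K, norm_mul, RCLike.norm_conj,
      norm_inv, norm_pow, RCLike.norm_ofReal, abs_norm]
    have hcoe : ‖((‖Y v‖ : ℝ) : ℂ)‖ = ‖Y v‖ := by
      rw [Complex.norm_real, norm_norm]
    rw [hcoe, pow_two, ← mul_assoc, inv_mul_cancel₀ hYv.ne', one_mul]
  have hub : ‖⟪w, Z u⟫_ℂ‖ ≤ ‖Z‖ * (‖u‖ * ‖w‖) := by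
    calc ‖⟪w, Z u⟫_ℂ‖ ≤ ‖w‖ * ‖Z u‖ := norm_inner_le_norm _ _
    _ ≤ ‖w‖ * (‖Z‖ * ‖u‖) := by
        apply mul_le_mul_of_nonneg_left (Z.le_opNorm u) (norm_nonneg _)
    _ = ‖Z‖ * (‖u‖ * ‖w‖) := by ring
  have hlb : 2 * ‖Y v‖ - 2 * (‖Y‖ * ‖Sh u‖ * ‖Sh w‖) ≤ ‖⟪w, Z u⟫_ℂ‖ := by
    rw [hinner]
    have t2' : ‖⟪Sh w, Y (Sh u)⟫_ℂ‖ ≤ ‖Y‖ * ‖Sh u‖ * ‖Sh w‖ := by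
      calc ‖⟪Sh w, Y (Sh u)⟫_ℂ‖ ≤ ‖Sh w‖ * ‖Y (Sh u)‖ := norm_inner_le_norm _ _
      _ ≤ ‖Sh w‖ * (‖Y‖ * ‖Sh u‖) :=
          mul_le_mul_of_nonneg_left (Y.le_opNorm _) (norm_nonneg _)
      _ = ‖Y‖ * ‖Sh u‖ * ‖Sh w‖ := by ring
    have hge := norm_sub_norm_le ((2:ℂ) * ⟪v', Y v⟫_ℂ) ((2:ℂ) * ⟪Sh w, Y (Sh u)⟫_ℂ)
    have e1 : ‖(2:ℂ) * ⟪v', Y v⟫_ℂ‖ = 2 * ‖Y v‖ := by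
      rw [norm_mul, t1']; norm_num
    have e2 : ‖(2:ℂ) * ⟪Sh w, Y (Sh u)⟫_ℂ‖ ≤ 2 * (‖Y‖ * ‖Sh u‖ * ‖Sh w‖) := by
      rw [norm_mul]
      have h2c : ‖(2:ℂ)‖ = 2 := by norm_num
      rw [h2c]; linarith
    linarith [hge, e1, e2]
  -- put it together
  have hq : ‖Sh u‖ * ‖Sh w‖ ≤ B^2 := by
    nlinarith [norm_nonneg (Sh u), norm_nonneg (Sh w)]
  have huw : ‖u‖ * ‖w‖ ≤ 1 - ‖Sh u‖ * ‖Sh w‖ :=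
    aux_uw _ _ _ _ _ _ (norm_nonneg u) (norm_nonneg w) (norm_nonneg (Sh u))
      (norm_nonneg (Sh w)) hv1 (norm_nonneg v) hbu hbw hB1 hB0 hu2 hw2
  have main : 2 * ‖Y v‖ - 2 * (‖Y‖ * ‖Sh u‖ * ‖Sh w‖) ≤ ‖Z‖ * (1 - ‖Sh u‖ * ‖Sh w‖) := by
    calc 2 * ‖Y v‖ - 2 * (‖Y‖ * ‖Sh u‖ * ‖Sh w‖) ≤ ‖Z‖ * (‖u‖ * ‖w‖) :=
          hlb.trans hub
    _ ≤ ‖Z‖ * (1 - ‖Sh u‖ * ‖Sh w‖) := mul_le_mul_of_nonneg_left huw hZ0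
  exact aux_final _ _ _ _ _ _ _ hZ0
    (mul_nonneg (norm_nonneg (Sh u)) (norm_nonneg (Sh w))) hq hB2lt hε hε'le hv2
    (by linarith [main])

lemma lemB (s s' X : H →L[ℂ] H) (hss' : s * s' = 1) (hs's : s' * s = 1) :
    2 * ‖X‖ ≤ ‖star s * X * s' + s' * X * star s‖ := by
  obtain ⟨t, htdef⟩ : ∃ z : H →L[ℂ] H, z = star s := ⟨_, rfl⟩
  obtain ⟨t', ht'def⟩ : ∃ z : H →L[ℂ] H, z = star s' := ⟨_, rfl⟩
  have htt : t' * t = 1 := by rw [htdef, ht'def, ← star_mul, hss', star_one]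
  have htt' : t * t' = 1 := by rw [htdef, ht'def, ← star_mul, hs's, star_one]
  obtain ⟨q, hqdef⟩ : ∃ z : H →L[ℂ] H, z = t * s := ⟨_, rfl⟩
  have hq0 : 0 ≤ q := by rw [hqdef, htdef]; exact star_mul_self_nonneg s
  obtain ⟨q', hq'def⟩ : ∃ z : H →L[ℂ] H, z = s' * t' := ⟨_, rfl⟩
  have hqq' : q * q' = 1 := by
    calc q * q' = t * (s * s') * t' := by simp only [hqdef, hq'def, mul_assoc]
    _ = t * t' := by rw [hss', mul_one]
    _ = 1 := htt'
  have hq'q : q' * q = 1 := by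
    calc q' * q = s' * (t' * t) * s := by simp only [hqdef, hq'def, mul_assoc]
    _ = s' * s := by rw [htt, mul_one]
    _ = 1 := hs's
  obtain ⟨p, hpdef⟩ : ∃ z : H →L[ℂ] H, z = CFC.sqrt q := ⟨_, rfl⟩
  have hp0 : (0:H →L[ℂ] H) ≤ p := by rw [hpdef]; exact CFC.sqrt_nonneg q
  have hpsa : IsSelfAdjoint p := IsSelfAdjoint.of_nonneg hp0
  have hpp : p * p = q := by rw [hpdef]; exact CFC.sqrt_mul_sqrt_self q hq0
  have hpq : p * q = q * p := by rw [← hpp, ← mul_assoc]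
  have hpq' : p * q' = q' * p := by
    calc p * q' = 1 * (p * q') := (one_mul _).symm
    _ = (q' * q) * (p * q') := by rw [hq'q]
    _ = q' * ((q * p) * q') := by simp only [mul_assoc]
    _ = q' * ((p * q) * q') := by rw [hpq]
    _ = q' * p * (q * q') := by simp only [mul_assoc]
    _ = q' * p := by rw [hqq', mul_one]
  obtain ⟨p', hp'def⟩ : ∃ z : H →L[ℂ] H, z = q' * p := ⟨_, rfl⟩
  have hp'p : p' * p = 1 := by rw [hp'def, mul_assoc, hpp, hq'q]
  have hpp' : p * p' = 1 := by
    calc p * p' = (p * q') * p := by rw [hp'def, mul_assoc]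
    _ = (q' * p) * p := by rw [hpq']
    _ = q' * (p * p) := by rw [mul_assoc]
    _ = 1 := by rw [hpp, hq'q]
  have hq'sa : IsSelfAdjoint q' := by
    rw [hq'def, ht'def, IsSelfAdjoint, star_mul, star_star]
  have hp'sa : IsSelfAdjoint p' := by
    rw [hp'def, IsSelfAdjoint, star_mul, hpsa.star_eq, hq'sa.star_eq, ← hpq']
  have hp'p' : p' * p' = q' := by
    calc p' * p' = q' * (p * q') * p := by simp only [hp'def, mul_assoc]
    _ = q' * (q' * p) * p := by rw [hpq']
    _ = q' * q' * (p * p) := by simp only [mul_assoc]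
    _ = q' * (q' * q) := by rw [hpp, mul_assoc]
    _ = q' := by rw [hq'q, mul_one]
  obtain ⟨U, hUdef⟩ : ∃ z : H →L[ℂ] H, z = s * p' := ⟨_, rfl⟩
  have hstarU : star U = p' * t := by
    rw [hUdef, star_mul, hp'sa.star_eq, htdef]
  have hq't : q' * t = s' := by
    rw [hq'def, mul_assoc, htt, mul_one]
  have hUU : star U * U = 1 := by
    calc star U * U = p' * (t * s) * p' := by
          rw [hstarU, hUdef]; simp only [mul_assoc]
    _ = p' * q * p' := by rw [hqdef]
    _ = p' * (p * p) * p' := by rw [hpp]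
    _ = (p' * p) * (p * p') := by simp only [mul_assoc]
    _ = 1 := by rw [hp'p, hpp', mul_one]
  have hUU' : U * star U = 1 := by
    calc U * star U = s * (p' * p') * t := by
          rw [hstarU, hUdef]; simp only [mul_assoc]
    _ = s * (q' * t) := by rw [hp'p', mul_assoc]
    _ = s * s' := by rw [hq't]
    _ = 1 := hss'
  obtain ⟨Y, hYdef⟩ : ∃ z : H →L[ℂ] H, z = star U * X := ⟨_, rfl⟩
  have hU1 : ‖U‖ ≤ 1 := by
    have h1 : ‖star U * U‖ = ‖U‖ * ‖U‖ := CStarRing.norm_star_mul_self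
    rw [hUU] at h1
    have h2 : ‖(1 : H →L[ℂ] H)‖ ≤ 1 := by
      rw [ContinuousLinearMap.one_def]; exact norm_id_le
    nlinarith [norm_nonneg U]
  have hXY : ‖X‖ ≤ ‖Y‖ := by
    have hX : U * Y = X := by rw [hYdef, ← mul_assoc, hUU', one_mul]
    calc ‖X‖ = ‖U * Y‖ := by rw [hX]
    _ ≤ ‖U‖ * ‖Y‖ := norm_mul_le _ _
    _ ≤ 1 * ‖Y‖ := mul_le_mul_of_nonneg_right hU1 (norm_nonneg _)
    _ = ‖Y‖ := one_mul _
  have hpY : p * Y = t * X := by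
    calc p * Y = (p * p') * (t * X) := by simp only [hYdef, hstarU, mul_assoc]
    _ = t * X := by rw [hpp', one_mul]
  have hp'Y : p' * Y = s' * X := by
    calc p' * Y = (p' * p') * (t * X) := by simp only [hYdef, hstarU, mul_assoc]
    _ = (q' * t) * X := by rw [hp'p', mul_assoc]
    _ = s' * X := by rw [hq't]
  have hW : (p * Y * p' + p' * Y * p) * star U = t * X * s' + s' * X * t := by
    have e1 : p * Y * p' * star U = t * X * s' := by
      calc p * Y * p' * star U = (p * Y) * (p' * (p' * t)) := by
            rw [hstarU]; simp only [mul_assoc]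
      _ = (t * X) * ((p' * p') * t) := by rw [hpY]; simp only [mul_assoc]
      _ = (t * X) * s' := by rw [hp'p', hq't]
      _ = t * X * s' := by simp only [mul_assoc]
    have e2 : p' * Y * p * star U = s' * X * t := by
      calc p' * Y * p * star U = (p' * Y) * (p * (p' * t)) := by
            rw [hstarU]; simp only [mul_assoc]
      _ = (s' * X) * ((p * p') * t) := by rw [hp'Y]; simp only [mul_assoc]
      _ = (s' * X) * t := by rw [hpp', one_mul]
      _ = s' * X * t := by simp only [mul_assoc]
    rw [add_mul, e1, e2]
  have hZW : ‖p * Y * p' + p' * Y * p‖ ≤ ‖t * X * s' + s' * X * t‖ := by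
    have hid : p * Y * p' + p' * Y * p = (t * X * s' + s' * X * t) * U := by
      rw [← hW, mul_assoc (p * Y * p' + p' * Y * p) (star U) U, hUU, mul_one]
    calc ‖p * Y * p' + p' * Y * p‖ = ‖(t * X * s' + s' * X * t) * U‖ := by rw [hid]
    _ ≤ ‖t * X * s' + s' * X * t‖ * ‖U‖ := norm_mul_le _ _
    _ ≤ ‖t * X * s' + s' * X * t‖ * 1 :=
        mul_le_mul_of_nonneg_left hU1 (norm_nonneg _)
    _ = ‖t * X * s' + s' * X * t‖ := mul_one _
  rw [← htdef]
  calc 2 * ‖X‖ ≤ 2 * ‖Y‖ := by linarith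
  _ ≤ ‖p * Y * p' + p' * Y * p‖ := lemA p p' Y hp0 hpp' hp'p
  _ ≤ ‖t * X * s' + s' * X * t‖ := hZW

theorem stmt16 (S : (H →L[ℂ] H)ˣ) (X : H →L[ℂ] H) :
    2 * ‖X‖ ≤ max
      ‖(S : H →L[ℂ] H) * X * adjoint (↑S⁻¹ : H →L[ℂ] H) +
        adjoint (↑S⁻¹ : H →L[ℂ] H) * X * (S : H →L[ℂ] H)‖
      ‖adjoint (S : H →L[ℂ] H) * X * (↑S⁻¹ : H →L[ℂ] H) +
        (↑S⁻¹ : H →L[ℂ] H) * X * adjoint (S : H →L[ℂ] H)‖ := by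
  refine le_trans ?_ (le_max_right _ _)
  rw [← star_eq_adjoint]
  exact lemB (S : H →L[ℂ] H) (↑S⁻¹ : H →L[ℂ] H) X
    (by rw [← Units.val_mul, mul_inv_cancel S, Units.val_one])
    (by rw [← Units.val_mul, inv_mul_cancel S, Units.val_one])
end

section
/- For an invertible normal bounded operator S on a complex Hilbert space and any bounded operator X, ‖S X S⁻¹‖ + ‖S⁻¹ X S‖ ≥ 2‖X‖. -/
open ContinuousLinearMap

section CstarLemmas

def auxStarSq {A : Type*} [Mul A] [Star A] (Y : A) : A := star Y * Y

variable {A : Type*} [NormedRing A] [StarRing A] [CStarRing A]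

lemma aux_norm_eq_sqrt (x : A) : ‖x‖ = Real.sqrt ‖star x * x‖ := by
  rw [CStarRing.norm_star_mul_self, Real.sqrt_mul_self (norm_nonneg x)]

/-- If `a` is normal, left multiplication by `star a` and `a` give same norms. -/
lemma aux_norm_star_mul_left {a : A} (ha : star a * a = a * star a) (y : A) :
    ‖star a * y‖ = ‖a * y‖ := by
  rw [aux_norm_eq_sqrt (star a * y), aux_norm_eq_sqrt (a * y)]
  congr 1
  have e : star (star a * y) * (star a * y) = star (a * y) * (a * y) := by
    simp only [star_mul, star_star]
    rw [mul_assoc, ← mul_assoc a (star a) y, ← ha, mul_assoc, ← mul_assoc]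
  rw [e]

lemma aux_norm_mul_star_right {a : A} (ha : star a * a = a * star a) (y : A) :
    ‖y * star a‖ = ‖y * a‖ := by
  calc ‖y * star a‖ = ‖star (y * star a)‖ := (norm_star _).symm
    _ = ‖a * star y‖ := by rw [star_mul, star_star]
    _ = ‖star a * star y‖ := (aux_norm_star_mul_left ha (star y)).symm
    _ = ‖star (y * a)‖ := by rw [star_mul]
    _ = ‖y * a‖ := norm_star _

end CstarLemmas

variable {H : Type*} [NormedAddCommGroup H] [InnerProductSpace ℂ H] [CompleteSpace H]

theorem stmt17 (S : (H →L[ℂ] H)ˣ) (hS : IsStarNormal (S : H →L[ℂ] H)) (X : H →L[ℂ] H) :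
    2 * ‖X‖ ≤ ‖(S : H →L[ℂ] H) * X * (↑S⁻¹ : H →L[ℂ] H)‖ +
      ‖(↑S⁻¹ : H →L[ℂ] H) * X * (S : H →L[ℂ] H)‖ := by
  set s : H →L[ℂ] H := ↑S with hs_def
  set t : H →L[ℂ] H := ↑S⁻¹ with ht_def
  have hst : s * t = 1 := S.mul_inv
  have hts : t * s = 1 := S.inv_mul
  have hs : star s * s = s * star s := hS.star_comm_self
  -- star t is the inverse of star s
  have h1 : star s * star t = 1 := by rw [← star_mul, hts, star_one]
  have h2 : star t * star s = 1 := by rw [← star_mul, hst, star_one]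
  -- t is normal
  have ht : star t * t = t * star t := by
    have e2 : (t * star t) * (s * star s) = 1 := by
      rw [← hs, ← mul_assoc, mul_assoc t (star t) (star s), h2, mul_one, hts]
    have e3 : (s * star s) * (t * star t) = 1 := by
      rw [← hs, mul_assoc, ← mul_assoc s t (star t), hst, one_mul, h1]
    have e1 : (star t * t) * (s * star s) = 1 := by
      rw [← mul_assoc, mul_assoc (star t) t s, hts, mul_one, h2]
    calc star t * t = (star t * t) * ((s * star s) * (t * star t)) := by
          rw [e3, mul_one]
      _ = ((star t * t) * (s * star s)) * (t * star t) := by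
          simp only [mul_assoc]
      _ = t * star t := by rw [e1, one_mul]
  set c := ‖s * X * t‖ with hc_def
  set d := ‖t * X * s‖ with hd_def
  have hc0 : 0 ≤ c := norm_nonneg _
  have hd0 : 0 ≤ d := norm_nonneg _
  -- key norm identities
  have keyc : ∀ Y : H →L[ℂ] H, ‖s * star Y * t‖ = ‖t * Y * s‖ := by
    intro Y
    calc ‖s * star Y * t‖ = ‖star (s * star Y * t)‖ := (norm_star _).symm
      _ = ‖star t * (Y * star s)‖ := by
          simp only [star_mul, star_star, mul_assoc]
      _ = ‖t * (Y * star s)‖ := aux_norm_star_mul_left ht _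
      _ = ‖(t * Y) * star s‖ := by rw [mul_assoc]
      _ = ‖t * Y * s‖ := aux_norm_mul_star_right hs _
  have keyd : ∀ Y : H →L[ℂ] H, ‖t * star Y * s‖ = ‖s * Y * t‖ := by
    intro Y
    calc ‖t * star Y * s‖ = ‖star (t * star Y * s)‖ := (norm_star _).symm
      _ = ‖star s * (Y * star t)‖ := by
          simp only [star_mul, star_star, mul_assoc]
      _ = ‖s * (Y * star t)‖ := aux_norm_star_mul_left hs _
      _ = ‖(s * Y) * star t‖ := by rw [mul_assoc]
      _ = ‖s * Y * t‖ := aux_norm_mul_star_right ht _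
  -- submultiplicative step
  have stepc : ∀ Y : H →L[ℂ] H,
      ‖s * (star Y * Y) * t‖ ≤ ‖t * Y * s‖ * ‖s * Y * t‖ := by
    intro Y
    have e : s * (star Y * Y) * t = (s * star Y * t) * (s * Y * t) := by
      calc s * (star Y * Y) * t = s * star Y * (1 * (Y * t)) := by
            simp only [mul_assoc, one_mul]
        _ = s * star Y * ((t * s) * (Y * t)) := by rw [hts]
        _ = (s * star Y * t) * (s * Y * t) := by simp only [mul_assoc]
    rw [e, ← keyc Y]
    exact norm_mul_le _ _
  have stepd : ∀ Y : H →L[ℂ] H,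
      ‖t * (star Y * Y) * s‖ ≤ ‖s * Y * t‖ * ‖t * Y * s‖ := by
    intro Y
    have e : t * (star Y * Y) * s = (t * star Y * s) * (t * Y * s) := by
      calc t * (star Y * Y) * s = t * star Y * (1 * (Y * s)) := by
            simp only [mul_assoc, one_mul]
        _ = t * star Y * ((s * t) * (Y * s)) := by rw [hst]
        _ = (t * star Y * s) * (t * Y * s) := by simp only [mul_assoc]
    rw [e, ← keyd Y]
    exact norm_mul_le _ _
  -- trivial similarity bounds
  have trivc : ∀ Y : H →L[ℂ] H, ‖Y‖ ≤ ‖t‖ * ‖s * Y * t‖ * ‖s‖ := by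
    intro Y
    have e : Y = t * (s * Y * t) * s := by
      calc Y = 1 * Y * 1 := by rw [one_mul, mul_one]
        _ = (t * s) * Y * (t * s) := by rw [hts]
        _ = t * (s * Y * t) * s := by noncomm_ring
    calc ‖Y‖ = ‖t * (s * Y * t) * s‖ := by rw [← e]
      _ ≤ ‖t * (s * Y * t)‖ * ‖s‖ := norm_mul_le _ _
      _ ≤ ‖t‖ * ‖s * Y * t‖ * ‖s‖ := by
          gcongr
          exact norm_mul_le _ _
  have trivd : ∀ Y : H →L[ℂ] H, ‖Y‖ ≤ ‖s‖ * ‖t * Y * s‖ * ‖t‖ := by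
    intro Y
    have e : Y = s * (t * Y * s) * t := by
      calc Y = 1 * Y * 1 := by rw [one_mul, mul_one]
        _ = (s * t) * Y * (s * t) := by rw [hst]
        _ = s * (t * Y * s) * t := by noncomm_ring
    calc ‖Y‖ = ‖s * (t * Y * s) * t‖ := by rw [← e]
      _ ≤ ‖s * (t * Y * s)‖ * ‖t‖ := norm_mul_le _ _
      _ ≤ ‖s‖ * ‖t * Y * s‖ * ‖t‖ := by
          gcongr
          exact norm_mul_le _ _
  -- iteration
  have main : ∀ n : ℕ,
      ‖s * (auxStarSq^[n] X) * t‖ * ‖t * (auxStarSq^[n] X) * s‖ ≤ (c * d) ^ (2 ^ n) ∧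
      ‖auxStarSq^[n] X‖ = ‖X‖ ^ (2 ^ n) := by
    intro n
    induction n with
    | zero => simp; exact le_rfl
    | succ n ih =>
      obtain ⟨ih1, ih2⟩ := ih
      set Y := auxStarSq^[n] X with hY
      have hiter : auxStarSq^[n + 1] X = star Y * Y := by
        rw [Function.iterate_succ_apply']
        rfl
      constructor
      · rw [hiter]
        have h1 := stepc Y
        have h2 := stepd Y
        calc ‖s * (star Y * Y) * t‖ * ‖t * (star Y * Y) * s‖
            ≤ (‖t * Y * s‖ * ‖s * Y * t‖) * (‖s * Y * t‖ * ‖t * Y * s‖) := by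
              apply mul_le_mul h1 h2 (norm_nonneg _)
              positivity
          _ = (‖s * Y * t‖ * ‖t * Y * s‖) ^ 2 := by ring
          _ ≤ ((c * d) ^ (2 ^ n)) ^ 2 := by
              apply pow_le_pow_left₀ (by positivity) ih1
          _ = (c * d) ^ (2 ^ (n + 1)) := by
              rw [← pow_mul, pow_succ]
      · rw [hiter, CStarRing.norm_star_mul_self, ih2, ← pow_add, pow_succ]
        congr 1
        ring
  -- uniform bound
  set K := ‖s‖ * ‖t‖ with hK_def
  have bound : ∀ n : ℕ, (‖X‖ ^ 2) ^ (2 ^ n) ≤ K ^ 2 * (c * d) ^ (2 ^ n) := by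
    intro n
    obtain ⟨h1, h2⟩ := main n
    set g := auxStarSq^[n] X with hg
    have b1 : ‖g‖ ≤ ‖t‖ * ‖s * g * t‖ * ‖s‖ := trivc g
    have b2 : ‖g‖ ≤ ‖s‖ * ‖t * g * s‖ * ‖t‖ := trivd g
    have hgnn : (0:ℝ) ≤ ‖g‖ := norm_nonneg _
    have : ‖g‖ ^ 2 ≤ K ^ 2 * (‖s * g * t‖ * ‖t * g * s‖) := by
      have := mul_le_mul b1 b2 hgnn (by positivity)
      calc ‖g‖ ^ 2 = ‖g‖ * ‖g‖ := sq ‖g‖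
        _ ≤ (‖t‖ * ‖s * g * t‖ * ‖s‖) * (‖s‖ * ‖t * g * s‖ * ‖t‖) := this
        _ = K ^ 2 * (‖s * g * t‖ * ‖t * g * s‖) := by rw [hK_def]; ring
    calc (‖X‖ ^ 2) ^ (2 ^ n) = (‖X‖ ^ (2 ^ n)) ^ 2 := by
          rw [← pow_mul, ← pow_mul, Nat.mul_comm]
      _ = ‖g‖ ^ 2 := by rw [h2]
      _ ≤ K ^ 2 * (‖s * g * t‖ * ‖t * g * s‖) := this
      _ ≤ K ^ 2 * (c * d) ^ (2 ^ n) := by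
          gcongr
  -- the crucial inequality ‖X‖^2 ≤ c * d
  have key : ‖X‖ ^ 2 ≤ c * d := by
    by_contra hlt
    push_neg at hlt
    have hx2 : 0 < ‖X‖ ^ 2 := lt_of_le_of_lt (mul_nonneg hc0 hd0) hlt
    have hcd0 : 0 < c * d := by
      rcases lt_or_eq_of_le (mul_nonneg hc0 hd0) with h | h
      · exact h
      · exfalso
        have := bound 0
        simp only [pow_zero, pow_one] at this
        rw [← h] at this
        nlinarith
    set r := ‖X‖ ^ 2 / (c * d) with hr_def
    have hr1 : 1 < r := (one_lt_div hcd0).mpr hlt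
    have hrn : ∀ n : ℕ, r ^ (2 ^ n) ≤ K ^ 2 := by
      intro n
      rw [hr_def, div_pow, div_le_iff₀ (by positivity)]
      exact bound n
    obtain ⟨n, hn⟩ := pow_unbounded_of_one_lt (K ^ 2) hr1
    have h2n : r ^ n ≤ r ^ (2 ^ n) :=
      pow_le_pow_right₀ (le_of_lt hr1) (le_of_lt (Nat.lt_two_pow_self (n := n)))
    linarith [hrn n]
  nlinarith [sq_nonneg (c - d), norm_nonneg X, sq_nonneg (c + d - 2 * ‖X‖)]
end
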